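/- arXiv:1502.05361 — 3 statements merged into one kernel-verified Lean document; each statement's English description precedes it below -/
import Mathlib

section
/- For every CSP instance Q and every nice tree decomposition T of its constraint graph, the polytope P(Q) is integral: every vertex of P(Q) is a 0/1 vector, i.e., P(Q) is the convex hull of its integral points. -/
/-! Common definitions: CSP instances, configurations, nice tree decompositions,
and the polytopes from Kolman–Koutecký. -/

/-- A constraint with scope `scope`; its satisfaction depends only on the
coordinates in the scope (it is a relation on the domains of the scope). -/
structure CSPConstraint (n : ℕ) where
  scope : Finset (Fin n)
  sat : (Fin n → ℝ) → Prop
  sat_congr : ∀ z z' : Fin n → ℝ, (∀ v ∈ scope, z v = z' v) → sat z → sat z'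

/-- A CSP instance: finite real domains, hard constraints and soft constraints. -/
structure CSPInstance (n : ℕ) where
  dom : Fin n → Finset ℝ
  hard : List (CSPConstraint n)
  soft : List (CSPConstraint n)

variable {n : ℕ}

/-- The list of all constraints (hard and soft). -/
def consList (Q : CSPInstance n) : List (CSPConstraint n) := Q.hard ++ Q.soft

/-- A feasible assignment: values in the domains, satisfying all hard constraints. -/
def Feasible (Q : CSPInstance n) (z : Fin n → ℝ) : Prop :=
  (∀ v, z v ∈ Q.dom v) ∧ ∀ C ∈ Q.hard, C.sat z

-- Configurations of a set `W` of variables: partial assignments (with `none`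
-- playing the role of the symbol `λ`) defined exactly on `W`.
open Classical in
noncomputable def configs (Q : CSPInstance n) (W : Finset (Fin n)) :
    Finset (Fin n → Option ℝ) :=
  (Fintype.piFinset fun v =>
      if v ∈ W then (Q.dom v).image some else ({none} : Finset (Option ℝ))).filter
    (fun K => ∀ C ∈ Q.hard, C.scope ⊆ W → C.sat (fun v => (K v).getD 0))

/-- Restriction `K↾_W` of a configuration: coordinates outside `W` are set to `λ`. -/
def restrictCfg (K : Fin n → Option ℝ) (W : Finset (Fin n)) : Fin n → Option ℝ :=
  fun v => if v ∈ W then K v else none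

/-- A (rooted) nice tree: leaves, introduce nodes, forget nodes and join nodes. -/
inductive NiceTree (n : ℕ) : Type
  | leaf (v : Fin n) : NiceTree n
  | introduce (v : Fin n) (t : NiceTree n) : NiceTree n
  | forget (v : Fin n) (t : NiceTree n) : NiceTree n
  | join (t₁ t₂ : NiceTree n) : NiceTree n

namespace NiceTree

/-- The bag of the root node of a nice tree. -/
def bag : NiceTree n → Finset (Fin n)
  | leaf v => {v}
  | introduce v t => insert v (bag t)
  | forget v t => (bag t).erase v
  | join t₁ _ => bag t₁

/-- All vertices appearing in bags of the tree. -/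
def verts : NiceTree n → Finset (Fin n)
  | leaf v => {v}
  | introduce v t => insert v (verts t)
  | forget _ t => verts t
  | join t₁ t₂ => verts t₁ ∪ verts t₂

/-- Number of nodes of the tree. -/
def size : NiceTree n → ℕ
  | leaf _ => 1
  | introduce _ t => size t + 1
  | forget _ t => size t + 1
  | join t₁ t₂ => size t₁ + size t₂ + 1

/-- Structural validity of a nice tree (in particular, the connectivity
condition of tree decompositions: an introduced vertex does not occur below,
and vertices shared by the two subtrees of a join lie in its bag). -/
def valid : NiceTree n → Prop
  | leaf _ => True
  | introduce v t => v ∉ verts t ∧ valid t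
  | forget v t => v ∈ bag t ∧ valid t
  | join t₁ t₂ => bag t₁ = bag t₂ ∧ verts t₁ ∩ verts t₂ ⊆ bag t₁ ∧ valid t₁ ∧ valid t₂

/-- `isSubtree s t`: `s` is a node (subtree) of `t`. -/
def isSubtree (s : NiceTree n) : NiceTree n → Prop
  | leaf v => s = leaf v
  | introduce v t => s = introduce v t ∨ isSubtree s t
  | forget v t => s = forget v t ∨ isSubtree s t
  | join t₁ t₂ => s = join t₁ t₂ ∨ isSubtree s t₁ ∨ isSubtree s t₂

-- The configurations relevant to the subtree: `ℛ(a) = ⋃_{b ∈ T(a)} 𝒦(B(b))`.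
open Classical in
noncomputable def relConfigs (Q : CSPInstance n) : NiceTree n → Finset (Fin n → Option ℝ)
  | leaf v => configs Q {v}
  | introduce v t => configs Q (insert v (bag t)) ∪ relConfigs Q t
  | forget v t => configs Q ((bag t).erase v) ∪ relConfigs Q t
  | join t₁ t₂ => relConfigs Q t₁ ∪ relConfigs Q t₂

end NiceTree

/-- A valid nice tree decomposition for the CSP instance `Q`: every variable is
in some bag and every constraint scope is contained in some bag. -/
def IsNiceTreeDecompCSP (Q : CSPInstance n) (T : NiceTree n) : Prop :=
  T.valid ∧ (∀ v : Fin n, v ∈ T.verts) ∧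
    ∀ C ∈ consList Q, ∃ s : NiceTree n, s.isSubtree T ∧ C.scope ⊆ s.bag

/-- A valid nice tree decomposition of a graph `G`: every vertex is in some bag
and both endpoints of every edge lie in a common bag. -/
def IsNiceTreeDecompGraph (G : SimpleGraph (Fin n)) (T : NiceTree n) : Prop :=
  T.valid ∧ (∀ v : Fin n, v ∈ T.verts) ∧
    ∀ u v : Fin n, G.Adj u v → ∃ s : NiceTree n, s.isSubtree T ∧ u ∈ s.bag ∧ v ∈ s.bag

/-- The constraint graph of a CSP instance. -/
def constraintGraph (Q : CSPInstance n) : SimpleGraph (Fin n) where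
  Adj u v := u ≠ v ∧ ∃ C ∈ consList Q, u ∈ C.scope ∧ v ∈ C.scope
  symm := by
    constructor
    rintro u v ⟨hne, C, hC, hu, hv⟩
    exact ⟨hne.symm, C, hC, hv, hu⟩
  loopless := by
    constructor
    rintro v ⟨hne, -⟩
    exact hne rfl

-- The LP constraints of `P(Q)` relevant to the subtree `t`: bag equations and
-- consistency equations at introduce and forget nodes of `t`.
def RelCons (Q : CSPInstance n) (f : (Fin n → Option ℝ) → ℝ) : NiceTree n → Prop
  | .leaf v => ∑ K ∈ configs Q {v}, f K = 1
  | .introduce v t =>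
      RelCons Q f t ∧ (∑ K ∈ configs Q (insert v t.bag), f K = 1) ∧
      ∀ K ∈ configs Q t.bag,
        ∑ K' ∈ (configs Q (insert v t.bag)).filter
            (fun K' => restrictCfg K' t.bag = K), f K' = f K
  | .forget v t =>
      RelCons Q f t ∧ (∑ K ∈ configs Q (t.bag.erase v), f K = 1) ∧
      ∀ K ∈ configs Q (t.bag.erase v),
        ∑ K' ∈ (configs Q t.bag).filter
            (fun K' => restrictCfg K' (t.bag.erase v) = K), f K' = f K
  | .join t₁ t₂ => RelCons Q f t₁ ∧ RelCons Q f t₂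

/-- All the constraints of `P(Q)` relevant to the subtree `t`, including the
bounds `0 ≤ f(K) ≤ 1` for relevant configurations. -/
def RelevantLP (Q : CSPInstance n) (t : NiceTree n) (f : (Fin n → Option ℝ) → ℝ) : Prop :=
  RelCons Q f t ∧ ∀ K ∈ t.relConfigs Q, 0 ≤ f K ∧ f K ≤ 1

/-- The polytope `P(Q) ⊆ ℝ^{𝒦_ℬ}` (coordinates outside `𝒦_ℬ` are zero). -/
def Ppoly (Q : CSPInstance n) (T : NiceTree n) : Set ((Fin n → Option ℝ) → ℝ) :=
  {f | RelevantLP Q T f ∧ ∀ K, K ∉ T.relConfigs Q → f K = 0}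

/-- Extended feasible assignments `(z, h)`. -/
def ExtAssignments (Q : CSPInstance n) :
    Set ((Fin n → ℝ) × (Fin Q.soft.length → ℝ)) :=
  {p | Feasible Q p.1 ∧ ∀ i : Fin Q.soft.length,
      ((Q.soft.get i).sat p.1 ∧ p.2 i = 1) ∨ (¬ (Q.soft.get i).sat p.1 ∧ p.2 i = 0)}

/-- `CSP(Q)`: the convex hull of all extended feasible assignments. -/
def CSPpolytope (Q : CSPInstance n) : Set ((Fin n → ℝ) × (Fin Q.soft.length → ℝ)) :=
  convexHull ℝ (ExtAssignments Q)

/-- `CSP'(Q)`: the convex hull of all feasible assignments. -/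
def CSPpolytope' (Q : CSPInstance n) : Set (Fin n → ℝ) :=
  convexHull ℝ {z | Feasible Q z}

/-- The `y`-variables of the basic LP: one for each `v ∈ V` and `i ∈ D_v`. -/
abbrev YType (Q : CSPInstance n) := (v : Fin n) → {i : ℝ // i ∈ Q.dom v} → ℝ

/-- The `g`-variables of the basic LP: one for each constraint `C_U ∈ 𝒞 ∪ ℋ`
and each configuration `K ∈ 𝒦(U)`. -/
abbrev GType (Q : CSPInstance n) :=
  (c : Fin (consList Q).length) →
    {K : Fin n → Option ℝ // K ∈ configs Q ((consList Q).get c).scope} → ℝ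

/-- The basic LP (1)–(3). -/
def BasicLP (Q : CSPInstance n) (p : YType Q × GType Q) : Prop :=
  (∀ v : Fin n, ∑ i ∈ (Q.dom v).attach, p.1 v i = 1) ∧
  (∀ c : Fin (consList Q).length, ∀ v ∈ ((consList Q).get c).scope,
    ∀ (i : ℝ) (hi : i ∈ Q.dom v),
      ∑ K ∈ (configs Q ((consList Q).get c).scope).attach.filter
          (fun K => K.1 v = some i), p.2 c K = p.1 v ⟨i, hi⟩) ∧
  (∀ v i, 0 ≤ p.1 v i ∧ p.1 v i ≤ 1) ∧ (∀ c K, 0 ≤ p.2 c K ∧ p.2 c K ≤ 1)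

/-- Integrality (all coordinates in `{0,1}`) of a `(y, g)` vector. -/
def IntegralYG (Q : CSPInstance n) (p : YType Q × GType Q) : Prop :=
  (∀ v i, p.1 v i = 0 ∨ p.1 v i = 1) ∧ ∀ c K, p.2 c K = 0 ∨ p.2 c K = 1

-- The map sending a (feasible) assignment `z` to the `(y, g)` vector of the basic LP.
open Classical in
noncomputable def exMap (Q : CSPInstance n) (z : Fin n → ℝ) : YType Q × GType Q :=
  (fun v i => if z v = i.1 then 1 else 0,
   fun c K => if ∀ u ∈ ((consList Q).get c).scope, K.1 u = some (z u) then 1 else 0)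

/-! ### Auxiliary development -/

open Finset NiceTree

namespace PpolyAux

variable {n : ℕ} {Q : CSPInstance n}

/-- Partial assignments supported exactly on `W`, with values in the domains. -/
noncomputable def assigns (Q : CSPInstance n) (W : Finset (Fin n)) :
    Finset (Fin n → Option ℝ) :=
  Fintype.piFinset fun v =>
    if v ∈ W then (Q.dom v).image some else ({none} : Finset (Option ℝ))

lemma mem_assigns_iff {W : Finset (Fin n)} {z : Fin n → Option ℝ} :
    z ∈ assigns Q W ↔ ∀ v, (v ∈ W → ∃ i ∈ Q.dom v, z v = some i) ∧ (v ∉ W → z v = none) := by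
  simp only [assigns, Fintype.mem_piFinset]
  apply forall_congr'
  intro v
  by_cases hv : v ∈ W <;> simp [hv, eq_comm]

lemma mem_configs_iff {W : Finset (Fin n)} {K : Fin n → Option ℝ} :
    K ∈ configs Q W ↔ K ∈ assigns Q W ∧
      ∀ C ∈ Q.hard, C.scope ⊆ W → C.sat (fun v => (K v).getD 0) := by
  classical
  simp [configs, assigns, Finset.mem_filter]

lemma configs_subset_assigns {W : Finset (Fin n)} : configs Q W ⊆ assigns Q W :=
  fun _ h => (mem_configs_iff.mp h).1

lemma restrictCfg_restrictCfg {U W : Finset (Fin n)} (h : U ⊆ W) (z : Fin n → Option ℝ) :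
    restrictCfg (restrictCfg z W) U = restrictCfg z U := by
  funext v
  unfold restrictCfg
  by_cases hv : v ∈ U
  · simp [hv, h hv]
  · simp [hv]

lemma restrictCfg_mem_assigns {U W : Finset (Fin n)} (h : U ⊆ W) {z : Fin n → Option ℝ}
    (hz : z ∈ assigns Q W) : restrictCfg z U ∈ assigns Q U := by
  rw [mem_assigns_iff] at hz ⊢
  intro v
  refine ⟨fun hv => ?_, fun hv => ?_⟩
  · obtain ⟨i, hi, hzi⟩ := (hz v).1 (h hv)
    exact ⟨i, hi, by simpa [restrictCfg, hv] using hzi⟩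
  · simp [restrictCfg, hv]

lemma restrictCfg_self {W : Finset (Fin n)} {z : Fin n → Option ℝ}
    (hz : z ∈ assigns Q W) : restrictCfg z W = z := by
  rw [mem_assigns_iff] at hz
  funext v
  by_cases hv : v ∈ W
  · simp [restrictCfg, hv]
  · simp [restrictCfg, hv, (hz v).2 hv]

lemma restrictCfg_mem_configs {U W : Finset (Fin n)} (h : U ⊆ W) {K : Fin n → Option ℝ}
    (hK : K ∈ configs Q W) : restrictCfg K U ∈ configs Q U := by
  rw [mem_configs_iff] at hK ⊢
  refine ⟨restrictCfg_mem_assigns h hK.1, fun C hC hscope => ?_⟩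
  refine C.sat_congr _ _ (fun v hv => ?_) (hK.2 C hC (hscope.trans h))
  simp [restrictCfg, hscope hv]

lemma config_support {W : Finset (Fin n)} {K : Fin n → Option ℝ} (hK : K ∈ configs Q W) :
    (univ.filter fun v => K v ≠ none) = W := by
  have h := mem_assigns_iff.mp (configs_subset_assigns hK)
  ext v
  simp only [mem_filter, mem_univ, true_and]
  constructor
  · intro hv
    by_contra hvW
    exact hv ((h v).2 hvW)
  · intro hv
    obtain ⟨i, _, hi⟩ := (h v).1 hv
    simp [hi]

lemma bag_subset_verts : ∀ t : NiceTree n, t.bag ⊆ t.verts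
  | .leaf _ => Finset.Subset.refl _
  | .introduce v t => insert_subset_insert v (bag_subset_verts t)
  | .forget v t => (erase_subset v _).trans (bag_subset_verts t)
  | .join t₁ t₂ => (bag_subset_verts t₁).trans subset_union_left

lemma isSubtree_refl : ∀ t : NiceTree n, t.isSubtree t
  | .leaf v => rfl
  | .introduce v t => Or.inl rfl
  | .forget v t => Or.inl rfl
  | .join t₁ t₂ => Or.inl rfl

lemma verts_subset_of_isSubtree : ∀ {s t : NiceTree n}, s.isSubtree t → s.verts ⊆ t.verts := by
  intro s t
  induction t with
  | leaf v => rintro rfl; exact Finset.Subset.refl _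
  | introduce v t ih =>
      rintro (rfl | h)
      · exact Finset.Subset.refl _
      · exact (ih h).trans (subset_insert _ _)
  | forget v t ih =>
      rintro (rfl | h)
      · exact Finset.Subset.refl _
      · exact ih h
  | join t₁ t₂ ih₁ ih₂ =>
      rintro (rfl | h | h)
      · exact Finset.Subset.refl _
      · exact (ih₁ h).trans subset_union_left
      · exact (ih₂ h).trans subset_union_right

lemma isSubtree_trans : ∀ {s t u : NiceTree n}, s.isSubtree t → t.isSubtree u → s.isSubtree u := by
  intro s t u hst htu
  induction u with
  | leaf v => subst htu; exact hst
  | introduce v t' ih =>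
      rcases htu with rfl | h
      · exact hst
      · exact Or.inr (ih h)
  | forget v t' ih =>
      rcases htu with rfl | h
      · exact hst
      · exact Or.inr (ih h)
  | join t₁ t₂ ih₁ ih₂ =>
      rcases htu with rfl | h | h
      · exact hst
      · exact Or.inr (Or.inl (ih₁ h))
      · exact Or.inr (Or.inr (ih₂ h))

lemma configs_rootbag_subset_relConfigs :
    ∀ t : NiceTree n, configs Q t.bag ⊆ relConfigs Q t
  | .leaf _ => Finset.Subset.refl _
  | .introduce _ _ => subset_union_left
  | .forget _ _ => subset_union_left
  | .join t₁ _ => (configs_rootbag_subset_relConfigs t₁).trans subset_union_left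

lemma configs_bag_subset_relConfigs {s : NiceTree n} :
    ∀ {t : NiceTree n}, s.isSubtree t → configs Q s.bag ⊆ relConfigs Q t := by
  intro t
  induction t with
  | leaf v => rintro rfl; exact Finset.Subset.refl _
  | introduce v t ih =>
      rintro (rfl | h)
      · exact subset_union_left
      · exact (ih h).trans subset_union_right
  | forget v t ih =>
      rintro (rfl | h)
      · exact subset_union_left
      · exact (ih h).trans subset_union_right
  | join t₁ t₂ ih₁ ih₂ =>
      rintro (rfl | h | h)
      · exact (configs_rootbag_subset_relConfigs t₁).trans subset_union_left
      · exact (ih₁ h).trans subset_union_left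
      · exact (ih₂ h).trans subset_union_right

lemma exists_of_mem_relConfigs {K : Fin n → Option ℝ} :
    ∀ {t : NiceTree n}, K ∈ relConfigs Q t → ∃ s : NiceTree n, s.isSubtree t ∧ K ∈ configs Q s.bag := by
  intro t
  induction t with
  | leaf v => intro h; exact ⟨.leaf v, rfl, h⟩
  | introduce v t ih =>
      intro h
      rcases mem_union.mp h with h | h
      · exact ⟨.introduce v t, Or.inl rfl, h⟩
      · obtain ⟨s, hs, hK⟩ := ih h
        exact ⟨s, Or.inr hs, hK⟩
  | forget v t ih =>
      intro h
      rcases mem_union.mp h with h | h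
      · exact ⟨.forget v t, Or.inl rfl, h⟩
      · obtain ⟨s, hs, hK⟩ := ih h
        exact ⟨s, Or.inr hs, hK⟩
  | join t₁ t₂ ih₁ ih₂ =>
      intro h
      rcases mem_union.mp h with h | h
      · obtain ⟨s, hs, hK⟩ := ih₁ h
        exact ⟨s, Or.inr (Or.inl hs), hK⟩
      · obtain ⟨s, hs, hK⟩ := ih₂ h
        exact ⟨s, Or.inr (Or.inr hs), hK⟩

lemma relCons_bag_sum {f : (Fin n → Option ℝ) → ℝ} :
    ∀ {t : NiceTree n}, RelCons Q f t → ∑ K ∈ configs Q t.bag, f K = 1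
  | .leaf v, h => h
  | .introduce v t, h => h.2.1
  | .forget v t, h => h.2.1
  | .join t₁ t₂, h => by exact relCons_bag_sum (t := t₁) h.1

lemma relCons_of_isSubtree {f : (Fin n → Option ℝ) → ℝ} {s : NiceTree n} :
    ∀ {t : NiceTree n}, s.isSubtree t → RelCons Q f t → RelCons Q f s := by
  intro t
  induction t with
  | leaf v => rintro rfl h; exact h
  | introduce v t ih => rintro (rfl | hs) h; exacts [h, ih hs h.1]
  | forget v t ih => rintro (rfl | hs) h; exacts [h, ih hs h.1]
  | join t₁ t₂ ih₁ ih₂ => rintro (rfl | hs | hs) h; exacts [h, ih₁ hs h.1, ih₂ hs h.2]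

end PpolyAux
namespace PpolyAux

variable {n : ℕ} {Q : CSPInstance n}

/-- Transfer of marginals along a refinement of assignment levels. -/
lemma marginal_transfer {W W' : Finset (Fin n)} (hWW : W ⊆ W')
    (μ' μ : (Fin n → Option ℝ) → ℝ)
    (h : ∀ z ∈ assigns Q W,
      ∑ z' ∈ (assigns Q W').filter (fun z' => restrictCfg z' W = z), μ' z' = μ z)
    {U : Finset (Fin n)} (hU : U ⊆ W) (K : Fin n → Option ℝ) :
    ∑ z' ∈ (assigns Q W').filter (fun z' => restrictCfg z' U = K), μ' z'
      = ∑ z ∈ (assigns Q W).filter (fun z => restrictCfg z U = K), μ z := by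
  classical
  rw [← Finset.sum_fiberwise_of_maps_to (g := fun z' => restrictCfg z' W)
    (t := (assigns Q W).filter (fun z => restrictCfg z U = K)) ?maps μ']
  · refine Finset.sum_congr rfl fun z hz => ?_
    rw [← h z (Finset.mem_filter.mp hz).1]
    refine Finset.sum_congr ?_ (fun _ _ => rfl)
    ext z'
    simp only [Finset.mem_filter]
    constructor
    · rintro ⟨⟨hz', -⟩, hrW⟩
      exact ⟨hz', hrW⟩
    · rintro ⟨hz', hrW⟩
      refine ⟨⟨hz', ?_⟩, hrW⟩
      rw [← restrictCfg_restrictCfg hU z', hrW]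
      exact (Finset.mem_filter.mp hz).2
  case maps =>
    intro z' hz'
    rcases Finset.mem_filter.mp hz' with ⟨hz', hrU⟩
    refine Finset.mem_filter.mpr ⟨restrictCfg_mem_assigns hWW hz', ?_⟩
    rw [restrictCfg_restrictCfg hU]
    exact hrU

/-- A sum of an indicator-style function over assignments reduces to configurations. -/
lemma sum_indicator_configs {U : Finset (Fin n)} (p : (Fin n → Option ℝ) → Prop)
    [DecidablePred p] (f : (Fin n → Option ℝ) → ℝ) :
    ∑ K ∈ (assigns Q U).filter p, (if K ∈ configs Q U then f K else 0)
      = ∑ K ∈ (configs Q U).filter p, f K := by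
  classical
  rw [← Finset.sum_subset (Finset.filter_subset_filter p (configs_subset_assigns (Q := Q)))
    (fun K _ hK => if_neg (fun hc => hK (Finset.mem_filter.mpr
      ⟨hc, (Finset.mem_filter.mp ‹K ∈ (assigns Q U).filter p›).2⟩)))]
  exact Finset.sum_congr rfl fun K hK => if_pos (Finset.mem_filter.mp hK).1

/-- The total mass of a measure supported on configurations at level `U`. -/
lemma total_mass {W U : Finset (Fin n)} (hU : U ⊆ W)
    (μ f : (Fin n → Option ℝ) → ℝ)
    (hsupp : ∀ z, μ z ≠ 0 → restrictCfg z U ∈ configs Q U)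
    (hmarg : ∀ K ∈ configs Q U,
      ∑ z ∈ (assigns Q W).filter (fun z => restrictCfg z U = K), μ z = f K) :
    ∑ z ∈ assigns Q W, μ z = ∑ K ∈ configs Q U, f K := by
  classical
  rw [← Finset.sum_fiberwise_of_maps_to (g := fun z => restrictCfg z U)
    (t := assigns Q U) (fun z hz => restrictCfg_mem_assigns hU hz) μ]
  have h2 : ∀ K ∈ assigns Q U, K ∉ configs Q U →
      ∑ z ∈ (assigns Q W).filter (fun z => restrictCfg z U = K), μ z = 0 := by
    intro K _ hK
    refine Finset.sum_eq_zero fun z hz => ?_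
    by_contra hμ
    exact hK (by
      have := hsupp z hμ
      rwa [(Finset.mem_filter.mp hz).2] at this)
  rw [← Finset.sum_subset (configs_subset_assigns (Q := Q) (W := U)) h2]
  exact Finset.sum_congr rfl hmarg

end PpolyAux
namespace PpolyAux

variable {n : ℕ} {Q : CSPInstance n}

lemma marg_pos {W U : Finset (Fin n)} (μ : (Fin n → Option ℝ) → ℝ)
    (hnn : ∀ z, 0 ≤ μ z) {z : Fin n → Option ℝ} (hz : z ∈ assigns Q W) {c : ℝ}
    (hsum : ∑ z' ∈ (assigns Q W).filter
      (fun z' => restrictCfg z' U = restrictCfg z U), μ z' = c)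
    (hμ : μ z ≠ 0) : 0 < c := by
  classical
  have hzf : z ∈ (assigns Q W).filter (fun z' => restrictCfg z' U = restrictCfg z U) :=
    Finset.mem_filter.mpr ⟨hz, rfl⟩
  have := Finset.single_le_sum (f := μ) (fun i _ => hnn i) hzf
  have hpos : 0 < μ z := lt_of_le_of_ne (hnn z) (Ne.symm hμ)
  linarith [hsum ▸ this]

theorem glue (Q : CSPInstance n) :
    ∀ t : NiceTree n, t.valid →
    ∀ f : (Fin n → Option ℝ) → ℝ, RelCons Q f t → (∀ K ∈ relConfigs Q t, 0 ≤ f K) →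
    ∃ μ : (Fin n → Option ℝ) → ℝ,
      (∀ z, 0 ≤ μ z) ∧
      (∀ z, μ z ≠ 0 → z ∈ assigns Q t.verts) ∧
      (∀ z, μ z ≠ 0 → ∀ s : NiceTree n, s.isSubtree t → restrictCfg z s.bag ∈ configs Q s.bag) ∧
      (∀ s : NiceTree n, s.isSubtree t → ∀ K ∈ configs Q s.bag,
        ∑ z ∈ (assigns Q t.verts).filter (fun z => restrictCfg z s.bag = K), μ z = f K) := by
  intro t
  induction t with
  | leaf v =>
      intro _ f hf hf0
      classical
      refine ⟨fun z => if z ∈ configs Q ({v} : Finset (Fin n)) then f z else 0, ?_, ?_, ?_, ?_⟩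
      · intro z
        by_cases hz : z ∈ configs Q ({v} : Finset (Fin n))
        · simpa [hz] using hf0 z hz
        · simp [hz]
      · intro z hz
        by_cases hzc : z ∈ configs Q ({v} : Finset (Fin n))
        · exact configs_subset_assigns hzc
        · simp [hzc] at hz
      · intro z hz s hs
        have hs' : s = .leaf v := hs
        subst hs'
        by_cases hzc : z ∈ configs Q ({v} : Finset (Fin n))
        · rw [show (NiceTree.leaf v).bag = ({v} : Finset (Fin n)) from rfl,
            restrictCfg_self (configs_subset_assigns hzc)]
          exact hzc
        · simp [hzc] at hz
      · intro s hs K hK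
        have hs' : s = .leaf v := hs
        subst hs'
        have hset : (assigns Q ({v} : Finset (Fin n))).filter
            (fun z => restrictCfg z ({v} : Finset (Fin n)) = K) = {K} := by
          ext z
          simp only [Finset.mem_filter, Finset.mem_singleton]
          constructor
          · rintro ⟨hz, hr⟩
            rw [← restrictCfg_self hz]
            exact hr
          · rintro rfl
            exact ⟨configs_subset_assigns hK, restrictCfg_self (configs_subset_assigns hK)⟩
        rw [show (NiceTree.leaf v).bag = ({v} : Finset (Fin n)) from rfl] at hK ⊢
        rw [show (NiceTree.leaf v).verts = ({v} : Finset (Fin n)) from rfl]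
        rw [hset, Finset.sum_singleton, if_pos hK]
  | introduce v t ih =>
      intro hval f hf hf0
      obtain ⟨hvt, hvalt⟩ := hval
      obtain ⟨μ, hnn, hsupp, hinv, hmarg⟩ :=
        ih hvalt f hf.1 (fun K hK => hf0 K (Finset.mem_union_right _ hK))
      classical
      have hvb : v ∉ t.bag := fun h => hvt (bag_subset_verts t h)
      have hBV : t.bag ⊆ t.verts := bag_subset_verts t
      have hBsub : t.bag ⊆ insert v t.bag := Finset.subset_insert _ _
      have hVsub : t.verts ⊆ insert v t.verts := Finset.subset_insert _ _
      have hB'W' : insert v t.bag ⊆ insert v t.verts := Finset.insert_subset_insert v hBV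
      have hf0B : ∀ K ∈ configs Q (insert v t.bag), 0 ≤ f K :=
        fun K hK => hf0 K (Finset.mem_union_left _ hK)
      have hf0t : ∀ K ∈ configs Q t.bag, 0 ≤ f K :=
        fun K hK => hf0 K (Finset.mem_union_right _ (configs_rootbag_subset_relConfigs t hK))
      have hposf : ∀ z, μ z ≠ 0 → 0 < f (restrictCfg z t.bag) := fun z hz =>
        marg_pos μ hnn (hsupp z hz)
          (hmarg t (isSubtree_refl t) _ (hinv z hz t (isSubtree_refl t))) hz
      set μ' : (Fin n → Option ℝ) → ℝ := fun z' =>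
        if z' ∈ assigns Q (insert v t.verts) ∧
            restrictCfg z' (insert v t.bag) ∈ configs Q (insert v t.bag) then
          μ (restrictCfg z' t.verts) * f (restrictCfg z' (insert v t.bag))
            / f (restrictCfg z' t.bag)
        else 0 with hμ'def
      have hval : ∀ z', μ' z' =
          if z' ∈ assigns Q (insert v t.verts) ∧
              restrictCfg z' (insert v t.bag) ∈ configs Q (insert v t.bag) then
            μ (restrictCfg z' t.verts) * f (restrictCfg z' (insert v t.bag))
              / f (restrictCfg z' t.bag)
          else 0 := fun _ => rfl
      have hrestr_tbag : ∀ z' : Fin n → Option ℝ,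
          restrictCfg (restrictCfg z' (insert v t.bag)) t.bag = restrictCfg z' t.bag :=
        fun z' => restrictCfg_restrictCfg hBsub z'
      have hcfg_tbag : ∀ z' : Fin n → Option ℝ,
          restrictCfg z' (insert v t.bag) ∈ configs Q (insert v t.bag) →
            restrictCfg z' t.bag ∈ configs Q t.bag := by
        intro z' h
        have := restrictCfg_mem_configs (Q := Q) hBsub h
        rwa [hrestr_tbag z'] at this
      have hkey : ∀ z', μ' z' ≠ 0 →
          (z' ∈ assigns Q (insert v t.verts) ∧
            restrictCfg z' (insert v t.bag) ∈ configs Q (insert v t.bag)) ∧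
          μ (restrictCfg z' t.verts) ≠ 0 := by
        intro z' h
        rw [hval] at h
        by_cases hg : z' ∈ assigns Q (insert v t.verts) ∧
            restrictCfg z' (insert v t.bag) ∈ configs Q (insert v t.bag)
        · refine ⟨hg, fun h0 => h ?_⟩
          rw [if_pos hg, h0, zero_mul, zero_div]
        · exact absurd (if_neg hg) h
      -- restriction of an update to the old vertex set
      have hrup : ∀ z ∈ assigns Q t.verts, ∀ o : Option ℝ,
          restrictCfg (Function.update z v o) t.verts = z := by
        intro z hz o
        funext w
        by_cases hw : w ∈ t.verts
        · have hwv : w ≠ v := fun h => hvt (h ▸ hw)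
          simp [restrictCfg, hw, Function.update_of_ne hwv]
        · simp [restrictCfg, hw, ((mem_assigns_iff.mp hz) w).2 hw]
      -- update membership in the extended assignments
      have hupmem : ∀ z ∈ assigns Q t.verts, ∀ o : Option ℝ,
          (∃ i ∈ Q.dom v, o = some i) →
          Function.update z v o ∈ assigns Q (insert v t.verts) := by
        intro z hz o ho
        rw [mem_assigns_iff] at hz ⊢
        intro w
        constructor
        · intro hw
          rcases Finset.mem_insert.mp hw with rfl | hw
          · simpa using ho
          · have hwv : w ≠ v := fun h => hvt (h ▸ hw)
            rw [Function.update_of_ne hwv]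
            exact (hz w).1 hw
        · intro hw
          have hwv : w ≠ v := fun h => hw (by rw [h]; exact Finset.mem_insert_self v _)
          rw [Function.update_of_ne hwv]
          exact (hz w).2 fun hwt => hw (Finset.mem_insert_of_mem hwt)
      -- restriction of an update to the new bag
      have hrupbag : ∀ z ∈ assigns Q t.verts, ∀ K' ∈ assigns Q (insert v t.bag),
          restrictCfg K' t.bag = restrictCfg z t.bag →
          restrictCfg (Function.update z v (K' v)) (insert v t.bag) = K' := by
        intro z hz K' hK' hr
        funext w
        by_cases hwv : w = v
        · subst hwv
          simp [restrictCfg, Finset.mem_insert_self]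
        · by_cases hw : w ∈ t.bag
          · have h1 : K' w = z w := by
              have := congrFun hr w
              simpa [restrictCfg, hw] using this
            simp [restrictCfg, Finset.mem_insert, hw, hwv, Function.update_of_ne hwv, h1]
          · have hw' : w ∉ insert v t.bag := by simp [Finset.mem_insert, hwv, hw]
            simp [restrictCfg, hw', ((mem_assigns_iff.mp hK') w).2 hw']
      have step : ∀ z ∈ assigns Q t.verts,
          ∑ z' ∈ (assigns Q (insert v t.verts)).filter
            (fun z' => restrictCfg z' t.verts = z), μ' z' = μ z := by
        intro z hz
        by_cases hμz : μ z = 0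
        · rw [hμz]
          refine Finset.sum_eq_zero fun z' hz' => ?_
          obtain ⟨hz'm, hr⟩ := Finset.mem_filter.mp hz'
          rw [hval]
          by_cases hg : z' ∈ assigns Q (insert v t.verts) ∧
              restrictCfg z' (insert v t.bag) ∈ configs Q (insert v t.bag)
          · rw [if_pos hg, hr, hμz, zero_mul, zero_div]
          · exact if_neg hg
        · have hKc : restrictCfg z t.bag ∈ configs Q t.bag := hinv z hμz t (isSubtree_refl t)
          have hfK : 0 < f (restrictCfg z t.bag) := hposf z hμz
          have hbij : ∑ z' ∈ (assigns Q (insert v t.verts)).filter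
                (fun z' => restrictCfg z' t.verts = z), μ' z'
              = ∑ K' ∈ (assigns Q (insert v t.bag)).filter
                  (fun K' => restrictCfg K' t.bag = restrictCfg z t.bag),
                  (if K' ∈ configs Q (insert v t.bag) then
                    μ z * f K' / f (restrictCfg z t.bag) else 0) := by
            refine Finset.sum_nbij' (fun z' => restrictCfg z' (insert v t.bag))
              (fun K' => Function.update z v (K' v)) ?_ ?_ ?_ ?_ ?_
            · intro z' hz'
              obtain ⟨hz'm, hr⟩ := Finset.mem_filter.mp hz'
              refine Finset.mem_filter.mpr ⟨restrictCfg_mem_assigns hB'W' hz'm, ?_⟩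
              rw [hrestr_tbag z', ← restrictCfg_restrictCfg hBV z', hr]
            · intro K' hK'
              obtain ⟨hK'm, hr⟩ := Finset.mem_filter.mp hK'
              refine Finset.mem_filter.mpr ⟨?_, hrup z hz _⟩
              refine hupmem z hz (K' v) ?_
              have := ((mem_assigns_iff.mp hK'm) v).1 (Finset.mem_insert_self v _)
              exact this
            · intro z' hz'
              obtain ⟨hz'm, hr⟩ := Finset.mem_filter.mp hz'
              funext w
              change Function.update z v (restrictCfg z' (insert v t.bag) v) w = z' w
              by_cases hwv : w = v
              · rw [hwv, Function.update_self]
                simp [restrictCfg, Finset.mem_insert_self]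
              · rw [Function.update_of_ne hwv]
                have := congrFun hr w
                by_cases hw : w ∈ t.verts
                · exact (by simpa [restrictCfg, hw] using this : z' w = z w).symm
                · have hw' : w ∉ insert v t.verts := by simp [Finset.mem_insert, hwv, hw]
                  have h0 := ((mem_assigns_iff.mp hz'm) w).2 hw'
                  have h1 := ((mem_assigns_iff.mp hz) w).2 hw
                  rw [h0, h1]
            · intro K' hK'
              obtain ⟨hK'm, hr⟩ := Finset.mem_filter.mp hK'
              exact hrupbag z hz K' hK'm hr
            · intro z' hz'
              obtain ⟨hz'm, hr⟩ := Finset.mem_filter.mp hz'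
              rw [hval]
              have hrtb : restrictCfg z' t.bag = restrictCfg z t.bag := by
                rw [← restrictCfg_restrictCfg hBV z', hr]
              by_cases hc : restrictCfg z' (insert v t.bag) ∈ configs Q (insert v t.bag)
              · rw [if_pos ⟨hz'm, hc⟩, if_pos hc, hr, hrtb]
              · rw [if_neg (fun h => hc h.2), if_neg hc]
          rw [hbij, sum_indicator_configs]
          have hsum := hf.2.2 (restrictCfg z t.bag) hKc
          calc ∑ K' ∈ (configs Q (insert v t.bag)).filter
                (fun K' => restrictCfg K' t.bag = restrictCfg z t.bag),
                μ z * f K' / f (restrictCfg z t.bag)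
              = μ z * ((∑ K' ∈ (configs Q (insert v t.bag)).filter
                  (fun K' => restrictCfg K' t.bag = restrictCfg z t.bag), f K')
                    / f (restrictCfg z t.bag)) := by
                rw [Finset.sum_div, Finset.mul_sum]
                exact Finset.sum_congr rfl fun K' _ => by ring
            _ = μ z := by rw [hsum, div_self hfK.ne', mul_one]
      refine ⟨μ', ?_, ?_, ?_, ?_⟩
      · intro z'
        rw [hval]
        by_cases hg : z' ∈ assigns Q (insert v t.verts) ∧
            restrictCfg z' (insert v t.bag) ∈ configs Q (insert v t.bag)
        · rw [if_pos hg]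
          exact div_nonneg (mul_nonneg (hnn _) (hf0B _ hg.2)) (hf0t _ (hcfg_tbag z' hg.2))
        · rw [if_neg hg]
      · intro z' hz'
        exact ((hkey z' hz').1).1
      · intro z' hz' s hs
        obtain ⟨⟨hz'm, hcfg⟩, hμne⟩ := hkey z' hz'
        rcases hs with rfl | hs
        · exact hcfg
        · have hsub : s.bag ⊆ t.verts :=
            (bag_subset_verts s).trans (verts_subset_of_isSubtree hs)
          have := hinv (restrictCfg z' t.verts) hμne s hs
          rwa [restrictCfg_restrictCfg hsub] at this
      · intro s hs K hK
        rcases hs with rfl | hs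
        · -- the new introduce node itself
          show ∑ z' ∈ (assigns Q (insert v t.verts)).filter
              (fun z' => restrictCfg z' (insert v t.bag) = K), μ' z' = f K
          have hK0 : restrictCfg K t.bag ∈ configs Q t.bag :=
            restrictCfg_mem_configs hBsub hK
          have hbij : ∑ z' ∈ (assigns Q (insert v t.verts)).filter
                (fun z' => restrictCfg z' (insert v t.bag) = K), μ' z'
              = ∑ z ∈ (assigns Q t.verts).filter
                  (fun z => restrictCfg z t.bag = restrictCfg K t.bag),
                  μ z * f K / f (restrictCfg K t.bag) := by
            refine Finset.sum_nbij' (fun z' => restrictCfg z' t.verts)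
              (fun z => Function.update z v (K v)) ?_ ?_ ?_ ?_ ?_
            · intro z' hz'
              obtain ⟨hz'm, hr⟩ := Finset.mem_filter.mp hz'
              refine Finset.mem_filter.mpr ⟨restrictCfg_mem_assigns hVsub hz'm, ?_⟩
              rw [restrictCfg_restrictCfg hBV, ← hr, hrestr_tbag z']
            · intro z hz
              obtain ⟨hzm, hr⟩ := Finset.mem_filter.mp hz
              refine Finset.mem_filter.mpr ⟨?_, ?_⟩
              · exact hupmem z hzm (K v)
                  (((mem_assigns_iff.mp (configs_subset_assigns hK)) v).1
                    (Finset.mem_insert_self v _))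
              · exact hrupbag z hzm K (configs_subset_assigns hK) hr.symm
            · intro z' hz'
              obtain ⟨hz'm, hr⟩ := Finset.mem_filter.mp hz'
              funext w
              change Function.update (restrictCfg z' t.verts) v (K v) w = z' w
              by_cases hwv : w = v
              · have hKv : K v = z' v := by
                  have h := congrFun hr v
                  rw [← h]
                  simp [restrictCfg, Finset.mem_insert_self]
                rw [hwv, Function.update_self, hKv]
              · rw [Function.update_of_ne hwv]
                by_cases hw : w ∈ t.verts
                · simp [restrictCfg, hw]
                · have hw' : w ∉ insert v t.verts := by simp [Finset.mem_insert, hwv, hw]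
                  have h0 := ((mem_assigns_iff.mp hz'm) w).2 hw'
                  simp [restrictCfg, hw, h0]
            · intro z hz
              obtain ⟨hzm, hr⟩ := Finset.mem_filter.mp hz
              exact hrup z hzm (K v)
            · intro z' hz'
              obtain ⟨hz'm, hr⟩ := Finset.mem_filter.mp hz'
              rw [hval, if_pos ⟨hz'm, hr ▸ hK⟩, hr]
              congr 1
              rw [← hrestr_tbag z', hr]
          rw [hbij]
          rcases eq_or_ne (f (restrictCfg K t.bag)) 0 with h0 | h0
          · have hall : ∀ K' ∈ (configs Q (insert v t.bag)).filter
                (fun K' => restrictCfg K' t.bag = restrictCfg K t.bag), f K' = 0 := by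
              have hsum := hf.2.2 (restrictCfg K t.bag) hK0
              rw [h0] at hsum
              intro K' hK'
              have hnn' : ∀ K' ∈ (configs Q (insert v t.bag)).filter
                  (fun K' => restrictCfg K' t.bag = restrictCfg K t.bag), 0 ≤ f K' :=
                fun K'' hK'' => hf0B _ (Finset.mem_filter.mp hK'').1
              exact (Finset.sum_eq_zero_iff_of_nonneg hnn').mp hsum K' hK'
            have hfK : f K = 0 := hall K (Finset.mem_filter.mpr ⟨hK, rfl⟩)
            rw [hfK, h0]
            simp
          · have hsumμ : ∑ z ∈ (assigns Q t.verts).filter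
                (fun z => restrictCfg z t.bag = restrictCfg K t.bag), μ z
                  = f (restrictCfg K t.bag) := hmarg t (isSubtree_refl t) _ hK0
            calc ∑ z ∈ (assigns Q t.verts).filter
                  (fun z => restrictCfg z t.bag = restrictCfg K t.bag),
                  μ z * f K / f (restrictCfg K t.bag)
                = (∑ z ∈ (assigns Q t.verts).filter
                    (fun z => restrictCfg z t.bag = restrictCfg K t.bag), μ z)
                      * f K / f (restrictCfg K t.bag) := by
                  rw [Finset.sum_mul, Finset.sum_div]
              _ = f K := by rw [hsumμ, mul_comm, mul_div_assoc, div_self h0, mul_one]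
        · -- an old subtree
          have hsub : s.bag ⊆ t.verts :=
            (bag_subset_verts s).trans (verts_subset_of_isSubtree hs)
          have htr := marginal_transfer (Q := Q) hVsub μ' μ step hsub K
          show ∑ z' ∈ (assigns Q (insert v t.verts)).filter
              (fun z' => restrictCfg z' s.bag = K), μ' z' = f K
          rw [htr]
          exact hmarg s hs K hK
  | forget v t ih =>
      intro hval f hf hf0
      obtain ⟨hvb, hvalt⟩ := hval
      obtain ⟨μ, hnn, hsupp, hinv, hmarg⟩ :=
        ih hvalt f hf.1 (fun K hK => hf0 K (Finset.mem_union_right _ hK))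
      classical
      refine ⟨μ, hnn, hsupp, ?_, ?_⟩
      · intro z hz s hs
        rcases hs with rfl | hs
        · have h1 := hinv z hz t (isSubtree_refl t)
          have h2 := restrictCfg_mem_configs (Q := Q) (Finset.erase_subset v t.bag) h1
          rwa [restrictCfg_restrictCfg (Finset.erase_subset v t.bag)] at h2
        · exact hinv z hz s hs
      · intro s hs K hK
        rcases hs with rfl | hs
        · show ∑ z ∈ (assigns Q t.verts).filter
              (fun z => restrictCfg z (t.bag.erase v) = K), μ z = f K
          have step : ∀ K'' ∈ assigns Q t.bag,
              ∑ z ∈ (assigns Q t.verts).filter (fun z => restrictCfg z t.bag = K''), μ z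
                = (if K'' ∈ configs Q t.bag then f K'' else 0) := by
            intro K'' _
            by_cases hc : K'' ∈ configs Q t.bag
            · rw [if_pos hc]
              exact hmarg t (isSubtree_refl t) K'' hc
            · rw [if_neg hc]
              refine Finset.sum_eq_zero fun z hz => ?_
              by_contra hμ
              have := hinv z hμ t (isSubtree_refl t)
              rw [(Finset.mem_filter.mp hz).2] at this
              exact hc this
          have htr := marginal_transfer (Q := Q) (bag_subset_verts t) μ
            (fun K'' => if K'' ∈ configs Q t.bag then f K'' else 0) step
            (Finset.erase_subset v t.bag) K
          rw [htr, sum_indicator_configs]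
          exact hf.2.2 K hK
        · exact hmarg s hs K hK
  | join t₁ t₂ ih₁ ih₂ =>
      intro hval f hf hf0
      obtain ⟨hbag, hint, hval₁, hval₂⟩ := hval
      obtain ⟨μ₁, hnn₁, hsupp₁, hinv₁, hmarg₁⟩ :=
        ih₁ hval₁ f hf.1 (fun K hK => hf0 K (Finset.mem_union_left _ hK))
      obtain ⟨μ₂, hnn₂, hsupp₂, hinv₂, hmarg₂⟩ :=
        ih₂ hval₂ f hf.2 (fun K hK => hf0 K (Finset.mem_union_right _ hK))
      classical
      have hB1 : t₁.bag ⊆ t₁.verts := bag_subset_verts t₁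
      have hB2 : t₁.bag ⊆ t₂.verts := by rw [hbag]; exact bag_subset_verts t₂
      have hU1 : t₁.verts ⊆ t₁.verts ∪ t₂.verts := Finset.subset_union_left
      have hU2 : t₂.verts ⊆ t₁.verts ∪ t₂.verts := Finset.subset_union_right
      have hIB : t₁.verts ∩ t₂.verts = t₁.bag :=
        subset_antisymm hint (Finset.subset_inter hB1 hB2)
      have hmarg₂' : ∀ K ∈ configs Q t₁.bag,
          ∑ z ∈ (assigns Q t₂.verts).filter (fun z => restrictCfg z t₁.bag = K), μ₂ z = f K := by
        rw [hbag]; exact hmarg₂ t₂ (isSubtree_refl t₂)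
      have hinv₂' : ∀ z, μ₂ z ≠ 0 → restrictCfg z t₁.bag ∈ configs Q t₁.bag := by
        rw [hbag]; exact fun z hz => hinv₂ z hz t₂ (isSubtree_refl t₂)
      have hmarg₁' : ∀ K ∈ configs Q t₁.bag,
          ∑ z ∈ (assigns Q t₁.verts).filter (fun z => restrictCfg z t₁.bag = K), μ₁ z = f K :=
        hmarg₁ t₁ (isSubtree_refl t₁)
      have hinv₁' : ∀ z, μ₁ z ≠ 0 → restrictCfg z t₁.bag ∈ configs Q t₁.bag :=
        fun z hz => hinv₁ z hz t₁ (isSubtree_refl t₁)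
      have hposf₁ : ∀ z, μ₁ z ≠ 0 → 0 < f (restrictCfg z t₁.bag) := fun z hz =>
        marg_pos μ₁ hnn₁ (hsupp₁ z hz) (hmarg₁' _ (hinv₁' z hz)) hz
      have hposf₂ : ∀ z, μ₂ z ≠ 0 → 0 < f (restrictCfg z t₁.bag) := fun z hz =>
        marg_pos μ₂ hnn₂ (hsupp₂ z hz) (hmarg₂' _ (hinv₂' z hz)) hz
      have hf0t : ∀ K ∈ configs Q t₁.bag, 0 ≤ f K := fun K hK =>
        hf0 K (Finset.mem_union_left _ (configs_rootbag_subset_relConfigs t₁ hK))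
      set μ : (Fin n → Option ℝ) → ℝ := fun z =>
        if z ∈ assigns Q (t₁.verts ∪ t₂.verts) then
          μ₁ (restrictCfg z t₁.verts) * μ₂ (restrictCfg z t₂.verts)
            / f (restrictCfg z t₁.bag)
        else 0 with hμdef
      have hval : ∀ z, μ z =
          if z ∈ assigns Q (t₁.verts ∪ t₂.verts) then
            μ₁ (restrictCfg z t₁.verts) * μ₂ (restrictCfg z t₂.verts)
              / f (restrictCfg z t₁.bag)
          else 0 := fun _ => rfl
      have hr1 : ∀ z : Fin n → Option ℝ,
          restrictCfg (restrictCfg z t₁.verts) t₁.bag = restrictCfg z t₁.bag :=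
        fun z => restrictCfg_restrictCfg hB1 z
      have hr2 : ∀ z : Fin n → Option ℝ,
          restrictCfg (restrictCfg z t₂.verts) t₁.bag = restrictCfg z t₁.bag :=
        fun z => restrictCfg_restrictCfg hB2 z
      have hkey : ∀ z, μ z ≠ 0 → z ∈ assigns Q (t₁.verts ∪ t₂.verts) ∧
          μ₁ (restrictCfg z t₁.verts) ≠ 0 ∧ μ₂ (restrictCfg z t₂.verts) ≠ 0 := by
        intro z h
        rw [hval] at h
        by_cases hg : z ∈ assigns Q (t₁.verts ∪ t₂.verts)
        · rw [if_pos hg] at h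
          refine ⟨hg, fun h1 => h ?_, fun h2 => h ?_⟩
          · rw [h1, zero_mul, zero_div]
          · rw [h2, mul_zero, zero_div]
        · exact absurd (if_neg hg) h
      -- the two one-step marginal identities
      have step₁ : ∀ z₁ ∈ assigns Q t₁.verts,
          ∑ z ∈ (assigns Q (t₁.verts ∪ t₂.verts)).filter
            (fun z => restrictCfg z t₁.verts = z₁), μ z = μ₁ z₁ := by
        intro z₁ hz₁
        by_cases hμ1 : μ₁ z₁ = 0
        · rw [hμ1]
          refine Finset.sum_eq_zero fun z hz => ?_
          obtain ⟨hzm, hr⟩ := Finset.mem_filter.mp hz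
          rw [hval, if_pos hzm, hr, hμ1, zero_mul, zero_div]
        · have hKc : restrictCfg z₁ t₁.bag ∈ configs Q t₁.bag := hinv₁' z₁ hμ1
          have hfK : 0 < f (restrictCfg z₁ t₁.bag) := hposf₁ z₁ hμ1
          have hbij : ∑ z ∈ (assigns Q (t₁.verts ∪ t₂.verts)).filter
                (fun z => restrictCfg z t₁.verts = z₁), μ z
              = ∑ z₂ ∈ (assigns Q t₂.verts).filter
                  (fun z₂ => restrictCfg z₂ t₁.bag = restrictCfg z₁ t₁.bag),
                  μ₁ z₁ * μ₂ z₂ / f (restrictCfg z₁ t₁.bag) := by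
            refine Finset.sum_nbij' (fun z => restrictCfg z t₂.verts)
              (fun z₂ => fun w => if w ∈ t₁.verts then z₁ w else z₂ w) ?_ ?_ ?_ ?_ ?_
            · intro z hz
              obtain ⟨hzm, hr⟩ := Finset.mem_filter.mp hz
              refine Finset.mem_filter.mpr ⟨restrictCfg_mem_assigns hU2 hzm, ?_⟩
              rw [hr2 z, ← hr1 z, hr]
            · intro z₂ hz₂
              obtain ⟨hz₂m, hr⟩ := Finset.mem_filter.mp hz₂
              refine Finset.mem_filter.mpr ⟨?_, ?_⟩
              · rw [mem_assigns_iff]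
                intro w
                constructor
                · intro hw
                  by_cases hw1 : w ∈ t₁.verts
                  · simpa [hw1] using ((mem_assigns_iff.mp hz₁) w).1 hw1
                  · have hw2 : w ∈ t₂.verts := by
                      rcases Finset.mem_union.mp hw with h | h
                      exacts [absurd h hw1, h]
                    simpa [hw1] using ((mem_assigns_iff.mp hz₂m) w).1 hw2
                · intro hw
                  have hw1 : w ∉ t₁.verts := fun h => hw (hU1 h)
                  have hw2 : w ∉ t₂.verts := fun h => hw (hU2 h)
                  simpa [hw1] using ((mem_assigns_iff.mp hz₂m) w).2 hw2
              · funext w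
                by_cases hw1 : w ∈ t₁.verts
                · simp [restrictCfg, hw1]
                · have h1 := ((mem_assigns_iff.mp hz₁) w).2 hw1
                  simp [restrictCfg, hw1, h1]
            · intro z hz
              obtain ⟨hzm, hr⟩ := Finset.mem_filter.mp hz
              funext w
              change (if w ∈ t₁.verts then z₁ w else restrictCfg z t₂.verts w) = z w
              by_cases hw1 : w ∈ t₁.verts
              · rw [if_pos hw1, ← hr]
                simp [restrictCfg, hw1]
              · rw [if_neg hw1]
                by_cases hw2 : w ∈ t₂.verts
                · simp [restrictCfg, hw2]
                · have hw : w ∉ t₁.verts ∪ t₂.verts := by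
                    simp [Finset.mem_union, hw1, hw2]
                  rw [((mem_assigns_iff.mp hzm) w).2 hw]
                  simp [restrictCfg, hw2]
            · intro z₂ hz₂
              obtain ⟨hz₂m, hr⟩ := Finset.mem_filter.mp hz₂
              funext w
              change restrictCfg (fun w => if w ∈ t₁.verts then z₁ w else z₂ w) t₂.verts w = z₂ w
              by_cases hw2 : w ∈ t₂.verts
              · by_cases hw1 : w ∈ t₁.verts
                · have hwB : w ∈ t₁.bag := hIB ▸ Finset.mem_inter.mpr ⟨hw1, hw2⟩
                  have h := congrFun hr w
                  simp only [restrictCfg, if_pos hwB] at h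
                  simp only [restrictCfg, if_pos hw2, if_pos hw1]
                  exact h.symm
                · simp [restrictCfg, hw2, hw1]
              · rw [((mem_assigns_iff.mp hz₂m) w).2 hw2]
                simp [restrictCfg, hw2]
            · intro z hz
              obtain ⟨hzm, hr⟩ := Finset.mem_filter.mp hz
              rw [hval, if_pos hzm, hr, ← hr1 z, hr]
          rw [hbij]
          calc ∑ z₂ ∈ (assigns Q t₂.verts).filter
                (fun z₂ => restrictCfg z₂ t₁.bag = restrictCfg z₁ t₁.bag),
                μ₁ z₁ * μ₂ z₂ / f (restrictCfg z₁ t₁.bag)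
              = μ₁ z₁ * ((∑ z₂ ∈ (assigns Q t₂.verts).filter
                  (fun z₂ => restrictCfg z₂ t₁.bag = restrictCfg z₁ t₁.bag), μ₂ z₂)
                    / f (restrictCfg z₁ t₁.bag)) := by
                rw [Finset.sum_div, Finset.mul_sum]
                exact Finset.sum_congr rfl fun _ _ => by ring
            _ = μ₁ z₁ := by
                rw [hmarg₂' _ hKc, div_self hfK.ne', mul_one]
      have step₂ : ∀ z₂ ∈ assigns Q t₂.verts,
          ∑ z ∈ (assigns Q (t₁.verts ∪ t₂.verts)).filter
            (fun z => restrictCfg z t₂.verts = z₂), μ z = μ₂ z₂ := by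
        intro z₂ hz₂
        by_cases hμ2 : μ₂ z₂ = 0
        · rw [hμ2]
          refine Finset.sum_eq_zero fun z hz => ?_
          obtain ⟨hzm, hr⟩ := Finset.mem_filter.mp hz
          rw [hval, if_pos hzm, hr, hμ2, mul_zero, zero_div]
        · have hKc : restrictCfg z₂ t₁.bag ∈ configs Q t₁.bag := hinv₂' z₂ hμ2
          have hfK : 0 < f (restrictCfg z₂ t₁.bag) := hposf₂ z₂ hμ2
          have hbij : ∑ z ∈ (assigns Q (t₁.verts ∪ t₂.verts)).filter
                (fun z => restrictCfg z t₂.verts = z₂), μ z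
              = ∑ z₁ ∈ (assigns Q t₁.verts).filter
                  (fun z₁ => restrictCfg z₁ t₁.bag = restrictCfg z₂ t₁.bag),
                  μ₁ z₁ * μ₂ z₂ / f (restrictCfg z₂ t₁.bag) := by
            refine Finset.sum_nbij' (fun z => restrictCfg z t₁.verts)
              (fun z₁ => fun w => if w ∈ t₂.verts then z₂ w else z₁ w) ?_ ?_ ?_ ?_ ?_
            · intro z hz
              obtain ⟨hzm, hr⟩ := Finset.mem_filter.mp hz
              refine Finset.mem_filter.mpr ⟨restrictCfg_mem_assigns hU1 hzm, ?_⟩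
              rw [hr1 z, ← hr2 z, hr]
            · intro z₁ hz₁
              obtain ⟨hz₁m, hr⟩ := Finset.mem_filter.mp hz₁
              refine Finset.mem_filter.mpr ⟨?_, ?_⟩
              · rw [mem_assigns_iff]
                intro w
                constructor
                · intro hw
                  by_cases hw2 : w ∈ t₂.verts
                  · simpa [hw2] using ((mem_assigns_iff.mp hz₂) w).1 hw2
                  · have hw1 : w ∈ t₁.verts := by
                      rcases Finset.mem_union.mp hw with h | h
                      exacts [h, absurd h hw2]
                    simpa [hw2] using ((mem_assigns_iff.mp hz₁m) w).1 hw1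
                · intro hw
                  have hw1 : w ∉ t₁.verts := fun h => hw (hU1 h)
                  have hw2 : w ∉ t₂.verts := fun h => hw (hU2 h)
                  simpa [hw2] using ((mem_assigns_iff.mp hz₁m) w).2 hw1
              · funext w
                by_cases hw2 : w ∈ t₂.verts
                · simp [restrictCfg, hw2]
                · simp only [restrictCfg, if_neg hw2]
                  rw [((mem_assigns_iff.mp hz₂) w).2 hw2]
            · intro z hz
              obtain ⟨hzm, hr⟩ := Finset.mem_filter.mp hz
              funext w
              change (if w ∈ t₂.verts then z₂ w else restrictCfg z t₁.verts w) = z w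
              by_cases hw2 : w ∈ t₂.verts
              · rw [if_pos hw2, ← hr]
                simp [restrictCfg, hw2]
              · rw [if_neg hw2]
                by_cases hw1 : w ∈ t₁.verts
                · simp [restrictCfg, hw1]
                · have hw : w ∉ t₁.verts ∪ t₂.verts := by
                    simp [Finset.mem_union, hw1, hw2]
                  rw [((mem_assigns_iff.mp hzm) w).2 hw]
                  simp [restrictCfg, hw1]
            · intro z₁ hz₁
              obtain ⟨hz₁m, hr⟩ := Finset.mem_filter.mp hz₁
              funext w
              change restrictCfg (fun w => if w ∈ t₂.verts then z₂ w else z₁ w) t₁.verts w = z₁ w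
              by_cases hw1 : w ∈ t₁.verts
              · by_cases hw2 : w ∈ t₂.verts
                · have hwB : w ∈ t₁.bag := hIB ▸ Finset.mem_inter.mpr ⟨hw1, hw2⟩
                  have h := congrFun hr w
                  simp only [restrictCfg, if_pos hwB] at h
                  simp only [restrictCfg, if_pos hw1, if_pos hw2]
                  exact h.symm
                · simp [restrictCfg, hw1, hw2]
              · rw [((mem_assigns_iff.mp hz₁m) w).2 hw1]
                simp [restrictCfg, hw1]
            · intro z hz
              obtain ⟨hzm, hr⟩ := Finset.mem_filter.mp hz
              rw [hval, if_pos hzm, hr, ← hr2 z, hr]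
          rw [hbij]
          calc ∑ z₁ ∈ (assigns Q t₁.verts).filter
                (fun z₁ => restrictCfg z₁ t₁.bag = restrictCfg z₂ t₁.bag),
                μ₁ z₁ * μ₂ z₂ / f (restrictCfg z₂ t₁.bag)
              = μ₂ z₂ * ((∑ z₁ ∈ (assigns Q t₁.verts).filter
                  (fun z₁ => restrictCfg z₁ t₁.bag = restrictCfg z₂ t₁.bag), μ₁ z₁)
                    / f (restrictCfg z₂ t₁.bag)) := by
                rw [Finset.sum_div, Finset.mul_sum]
                exact Finset.sum_congr rfl fun _ _ => by ring
            _ = μ₂ z₂ := by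
                rw [hmarg₁' _ hKc, div_self hfK.ne', mul_one]
      refine ⟨μ, ?_, ?_, ?_, ?_⟩
      · intro z
        rw [hval]
        by_cases hg : z ∈ assigns Q (t₁.verts ∪ t₂.verts)
        · rw [if_pos hg]
          by_cases hμ1 : μ₁ (restrictCfg z t₁.verts) = 0
          · rw [hμ1, zero_mul, zero_div]
          · have hfK : 0 < f (restrictCfg z t₁.bag) := by
              rw [← hr1 z]
              exact hposf₁ _ hμ1
            exact div_nonneg (mul_nonneg (hnn₁ _) (hnn₂ _)) hfK.le
        · rw [if_neg hg]
      · intro z hz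
        exact (hkey z hz).1
      · intro z hz s hs
        obtain ⟨hzm, hμ1, hμ2⟩ := hkey z hz
        rcases hs with rfl | hs | hs
        · show restrictCfg z t₁.bag ∈ configs Q t₁.bag
          rw [← hr1 z]
          exact hinv₁' _ hμ1
        · have hsub : s.bag ⊆ t₁.verts :=
            (bag_subset_verts s).trans (verts_subset_of_isSubtree hs)
          have := hinv₁ (restrictCfg z t₁.verts) hμ1 s hs
          rwa [restrictCfg_restrictCfg hsub] at this
        · have hsub : s.bag ⊆ t₂.verts :=
            (bag_subset_verts s).trans (verts_subset_of_isSubtree hs)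
          have := hinv₂ (restrictCfg z t₂.verts) hμ2 s hs
          rwa [restrictCfg_restrictCfg hsub] at this
      · intro s hs K hK
        rcases hs with rfl | hs | hs
        · show ∑ z ∈ (assigns Q (t₁.verts ∪ t₂.verts)).filter
              (fun z => restrictCfg z t₁.bag = K), μ z = f K
          rw [marginal_transfer (Q := Q) hU1 μ μ₁ step₁ hB1 K]
          exact hmarg₁' K hK
        · have hsub : s.bag ⊆ t₁.verts :=
            (bag_subset_verts s).trans (verts_subset_of_isSubtree hs)
          show ∑ z ∈ (assigns Q (t₁.verts ∪ t₂.verts)).filter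
              (fun z => restrictCfg z s.bag = K), μ z = f K
          rw [marginal_transfer (Q := Q) hU1 μ μ₁ step₁ hsub K]
          exact hmarg₁ s hs K hK
        · have hsub : s.bag ⊆ t₂.verts :=
            (bag_subset_verts s).trans (verts_subset_of_isSubtree hs)
          show ∑ z ∈ (assigns Q (t₁.verts ∪ t₂.verts)).filter
              (fun z => restrictCfg z s.bag = K), μ z = f K
          rw [marginal_transfer (Q := Q) hU2 μ μ₂ step₂ hsub K]
          exact hmarg₂ s hs K hK

end PpolyAux
namespace PpolyAux

variable {n : ℕ} {Q : CSPInstance n}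

lemma relCons_smul_add {f g : (Fin n → Option ℝ) → ℝ} {a b : ℝ} (hab : a + b = 1) :
    ∀ t : NiceTree n, RelCons Q f t → RelCons Q g t →
      RelCons Q (fun K => a * f K + b * g K) t := by
  intro t
  induction t with
  | leaf v =>
      intro hf hg
      show ∑ K ∈ configs Q {v}, (a * f K + b * g K) = 1
      rw [Finset.sum_add_distrib, ← Finset.mul_sum, ← Finset.mul_sum, hf, hg,
        mul_one, mul_one, hab]
  | introduce v t ih =>
      intro hf hg
      refine ⟨ih hf.1 hg.1, ?_, ?_⟩
      · rw [Finset.sum_add_distrib, ← Finset.mul_sum, ← Finset.mul_sum, hf.2.1, hg.2.1,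
          mul_one, mul_one, hab]
      · intro K hK
        rw [Finset.sum_add_distrib, ← Finset.mul_sum, ← Finset.mul_sum,
          hf.2.2 K hK, hg.2.2 K hK]
  | forget v t ih =>
      intro hf hg
      refine ⟨ih hf.1 hg.1, ?_, ?_⟩
      · rw [Finset.sum_add_distrib, ← Finset.mul_sum, ← Finset.mul_sum, hf.2.1, hg.2.1,
          mul_one, mul_one, hab]
      · intro K hK
        rw [Finset.sum_add_distrib, ← Finset.mul_sum, ← Finset.mul_sum,
          hf.2.2 K hK, hg.2.2 K hK]
  | join t₁ t₂ ih₁ ih₂ =>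
      intro hf hg
      exact ⟨ih₁ hf.1 hg.1, ih₂ hf.2 hg.2⟩

lemma ppoly_convex (T : NiceTree n) : Convex ℝ (Ppoly Q T) := by
  intro x hx y hy a b ha hb hab
  obtain ⟨⟨hxc, hxb⟩, hx0⟩ := hx
  obtain ⟨⟨hyc, hyb⟩, hy0⟩ := hy
  have hfun : a • x + b • y = fun K => a * x K + b * y K := rfl
  refine ⟨⟨?_, ?_⟩, ?_⟩
  · rw [hfun]
    exact relCons_smul_add hab T hxc hyc
  · intro K hK
    have h1 := hxb K hK
    have h2 := hyb K hK
    constructor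
    · have : (a • x + b • y) K = a * x K + b * y K := rfl
      rw [this]
      nlinarith [h1.1, h2.1]
    · have : (a • x + b • y) K = a * x K + b * y K := rfl
      rw [this]
      nlinarith [h1.2, h2.2]
  · intro K hK
    have : (a • x + b • y) K = a * x K + b * y K := rfl
    rw [this, hx0 K hK, hy0 K hK, mul_zero, mul_zero, add_zero]

/-- The 0/1 point of `P(Q)` corresponding to a global assignment `z`. -/
noncomputable def eInd (Q : CSPInstance n) (T : NiceTree n) (z : Fin n → Option ℝ) :
    (Fin n → Option ℝ) → ℝ :=
  fun K => if K ∈ relConfigs Q T ∧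
      restrictCfg z (Finset.univ.filter fun v => K v ≠ none) = K then 1 else 0

lemma eInd_eq {T s : NiceTree n} (hs : s.isSubtree T) {K : Fin n → Option ℝ}
    (hK : K ∈ configs Q s.bag) (z : Fin n → Option ℝ) :
    eInd Q T z K = if restrictCfg z s.bag = K then 1 else 0 := by
  unfold eInd
  rw [config_support hK]
  exact if_congr (and_iff_right (configs_bag_subset_relConfigs hs hK)) rfl rfl

lemma isSubtree_introduce (v : Fin n) (t : NiceTree n) :
    t.isSubtree (NiceTree.introduce v t) := Or.inr (isSubtree_refl t)

lemma isSubtree_forget (v : Fin n) (t : NiceTree n) :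
    t.isSubtree (NiceTree.forget v t) := Or.inr (isSubtree_refl t)

lemma isSubtree_join_left (t₁ t₂ : NiceTree n) :
    t₁.isSubtree (NiceTree.join t₁ t₂) := Or.inr (Or.inl (isSubtree_refl t₁))

lemma isSubtree_join_right (t₁ t₂ : NiceTree n) :
    t₂.isSubtree (NiceTree.join t₁ t₂) := Or.inr (Or.inr (isSubtree_refl t₂))

set_option maxHeartbeats 2000000 in
lemma eInd_relCons {T : NiceTree n} {z : Fin n → Option ℝ}
    (hz : ∀ s : NiceTree n, s.isSubtree T → restrictCfg z s.bag ∈ configs Q s.bag) :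
    ∀ t : NiceTree n, t.isSubtree T → RelCons Q (eInd Q T z) t := by
  intro t
  induction t with
  | leaf v =>
      intro ht
      show ∑ K ∈ configs Q {v}, eInd Q T z K = 1
      have h1 : ∑ K ∈ configs Q ({v} : Finset (Fin n)), eInd Q T z K
          = ∑ K ∈ configs Q ({v} : Finset (Fin n)),
              (if restrictCfg z (NiceTree.leaf v).bag = K then 1 else 0) :=
        Finset.sum_congr rfl (fun K hK => eInd_eq (Q := Q) ht hK z)
      rw [h1, Finset.sum_ite_eq]
      exact if_pos (hz (NiceTree.leaf v) ht)
  | introduce v t ih =>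
      intro ht
      have htT : t.isSubtree T := isSubtree_trans (isSubtree_introduce v t) ht
      refine ⟨ih htT, ?_, ?_⟩
      · show ∑ K ∈ configs Q (insert v t.bag), eInd Q T z K = 1
        have h1 : ∑ K ∈ configs Q (insert v t.bag), eInd Q T z K
            = ∑ K ∈ configs Q (insert v t.bag),
                (if restrictCfg z (NiceTree.introduce v t).bag = K then 1 else 0) :=
          Finset.sum_congr rfl (fun K hK => eInd_eq (Q := Q) ht hK z)
        rw [h1, Finset.sum_ite_eq]
        exact if_pos (hz (NiceTree.introduce v t) ht)
      · intro K hK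
        have h1 : ∑ K' ∈ (configs Q (insert v t.bag)).filter
              (fun K' => restrictCfg K' t.bag = K), eInd Q T z K'
            = ∑ K' ∈ (configs Q (insert v t.bag)).filter
                (fun K' => restrictCfg K' t.bag = K),
                (if restrictCfg z (NiceTree.introduce v t).bag = K' then 1 else 0) :=
          Finset.sum_congr rfl
            (fun K' hK' => eInd_eq (Q := Q) ht (Finset.mem_filter.mp hK').1 z)
        rw [h1, Finset.sum_ite_eq, eInd_eq (Q := Q) htT hK z]
        refine if_congr ?_ rfl rfl
        constructor
        · intro h
          obtain ⟨-, hr⟩ := Finset.mem_filter.mp h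
          rw [← hr]
          exact (restrictCfg_restrictCfg (Finset.subset_insert v t.bag) z).symm
        · intro h
          refine Finset.mem_filter.mpr ⟨hz (NiceTree.introduce v t) ht, ?_⟩
          rw [show (NiceTree.introduce v t).bag = insert v t.bag from rfl,
            restrictCfg_restrictCfg (Finset.subset_insert v t.bag)]
          exact h
  | forget v t ih =>
      intro ht
      have htT : t.isSubtree T := isSubtree_trans (isSubtree_forget v t) ht
      refine ⟨ih htT, ?_, ?_⟩
      · show ∑ K ∈ configs Q (t.bag.erase v), eInd Q T z K = 1
        have h1 : ∑ K ∈ configs Q (t.bag.erase v), eInd Q T z K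
            = ∑ K ∈ configs Q (t.bag.erase v),
                (if restrictCfg z (NiceTree.forget v t).bag = K then 1 else 0) :=
          Finset.sum_congr rfl (fun K hK => eInd_eq (Q := Q) ht hK z)
        rw [h1, Finset.sum_ite_eq]
        exact if_pos (hz (NiceTree.forget v t) ht)
      · intro K hK
        have h1 : ∑ K' ∈ (configs Q t.bag).filter
              (fun K' => restrictCfg K' (t.bag.erase v) = K), eInd Q T z K'
            = ∑ K' ∈ (configs Q t.bag).filter
                (fun K' => restrictCfg K' (t.bag.erase v) = K),
                (if restrictCfg z t.bag = K' then 1 else 0) :=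
          Finset.sum_congr rfl
            (fun K' hK' => eInd_eq (Q := Q) htT (Finset.mem_filter.mp hK').1 z)
        rw [h1, Finset.sum_ite_eq, eInd_eq (Q := Q) ht hK z]
        refine if_congr ?_ rfl rfl
        constructor
        · intro h
          obtain ⟨-, hr⟩ := Finset.mem_filter.mp h
          show restrictCfg z (t.bag.erase v) = K
          rw [← hr]
          exact (restrictCfg_restrictCfg (Finset.erase_subset v t.bag) z).symm
        · intro h
          refine Finset.mem_filter.mpr ⟨hz t htT, ?_⟩
          rw [restrictCfg_restrictCfg (Finset.erase_subset v t.bag)]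
          exact h
  | join t₁ t₂ ih₁ ih₂ =>
      intro ht
      exact ⟨ih₁ (isSubtree_trans (isSubtree_join_left t₁ t₂) ht),
             ih₂ (isSubtree_trans (isSubtree_join_right t₁ t₂) ht)⟩

lemma eInd_mem {T : NiceTree n} {z : Fin n → Option ℝ}
    (hz : ∀ s : NiceTree n, s.isSubtree T → restrictCfg z s.bag ∈ configs Q s.bag) :
    eInd Q T z ∈ Ppoly Q T ∧ ∀ K, eInd Q T z K = 0 ∨ eInd Q T z K = 1 := by
  refine ⟨⟨⟨eInd_relCons hz T (isSubtree_refl T), ?_⟩, ?_⟩, ?_⟩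
  · intro K _
    unfold eInd
    split_ifs <;> norm_num
  · intro K hK
    exact if_neg (fun h => hK h.1)
  · intro K
    unfold eInd
    split_ifs <;> simp

end PpolyAux
/-- The polytope `P(Q)` is integral: it is the convex hull of
its integral (0/1) points. -/
theorem ppoly_integral (n : ℕ) (Q : CSPInstance n) (T : NiceTree n)
    (hT : IsNiceTreeDecompCSP Q T) :
    Ppoly Q T = convexHull ℝ {f | f ∈ Ppoly Q T ∧ ∀ K, f K = 0 ∨ f K = 1} := by
  classical
  refine Set.Subset.antisymm ?_
    (convexHull_min (fun g hg => hg.1) (PpolyAux.ppoly_convex T))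
  intro f hf
  obtain ⟨⟨hrel, hbounds⟩, hzero⟩ := hf
  obtain ⟨hvalid, -⟩ := hT
  obtain ⟨μ, hnn, hsupp, hinv, hmarg⟩ :=
    PpolyAux.glue Q T hvalid f hrel (fun K hK => (hbounds K hK).1)
  have htot : ∑ z ∈ PpolyAux.assigns Q T.verts, μ z = 1 := by
    rw [PpolyAux.total_mass (PpolyAux.bag_subset_verts T) μ f
      (fun z hz => hinv z hz T (PpolyAux.isSubtree_refl T))
      (hmarg T (PpolyAux.isSubtree_refl T))]
    exact PpolyAux.relCons_bag_sum hrel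
  set S := (PpolyAux.assigns Q T.verts).filter (fun z => μ z ≠ 0) with hS
  have htotS : ∑ z ∈ S, μ z = 1 := by
    rw [hS, Finset.sum_filter_ne_zero]
    exact htot
  have hgood : ∀ z ∈ S, ∀ s : NiceTree n, s.isSubtree T →
      restrictCfg z s.bag ∈ configs Q s.bag :=
    fun z hz => hinv z (Finset.mem_filter.mp hz).2
  have hrep : f = ∑ z ∈ S, μ z • PpolyAux.eInd Q T z := by
    funext K
    rw [Finset.sum_apply]
    by_cases hKr : K ∈ NiceTree.relConfigs Q T
    · obtain ⟨s, hsT, hKs⟩ := PpolyAux.exists_of_mem_relConfigs hKr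
      have h1 : ∀ z ∈ S, (μ z • PpolyAux.eInd Q T z) K
          = if restrictCfg z s.bag = K then μ z else 0 := by
        intro z _
        have h2 : (μ z • PpolyAux.eInd Q T z) K = μ z * PpolyAux.eInd Q T z K := rfl
        rw [h2, PpolyAux.eInd_eq hsT hKs z, mul_ite, mul_one, mul_zero]
      rw [Finset.sum_congr rfl h1, Finset.sum_ite, Finset.sum_const_zero, add_zero]
      have hSfilter : S.filter (fun z => restrictCfg z s.bag = K)
          = ((PpolyAux.assigns Q T.verts).filter
              (fun z => restrictCfg z s.bag = K)).filter (fun z => μ z ≠ 0) := by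
        rw [hS, Finset.filter_filter, Finset.filter_filter]
        exact Finset.filter_congr (fun z _ => and_comm)
      rw [hSfilter, Finset.sum_filter_ne_zero]
      exact (hmarg s hsT K hKs).symm
    · rw [hzero K hKr]
      refine (Finset.sum_eq_zero fun z _ => ?_).symm
      have h2 : (μ z • PpolyAux.eInd Q T z) K = μ z * PpolyAux.eInd Q T z K := rfl
      have h3 : PpolyAux.eInd Q T z K = 0 := if_neg (fun h => hKr h.1)
      rw [h2, h3, mul_zero]
  have hmem : ∀ z ∈ S, PpolyAux.eInd Q T z ∈
      {f | f ∈ Ppoly Q T ∧ ∀ K, f K = 0 ∨ f K = 1} :=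
    fun z hz => PpolyAux.eInd_mem (hgood z hz)
  have hcm := Finset.centerMass_mem_convexHull S (fun z _ => hnn z)
    (by rw [htotS]; norm_num) hmem
  rw [Finset.centerMass_eq_of_sum_1 _ _ htotS] at hcm
  rw [hrep]
  exact hcm
end

section
/- Let f be a vertex of the polytope P(Q). For every node b of the nice tree decomposition T, there exist a positive integer M and binary vectors I_1, I_2, …, I_M ∈ {0,1}^(ℛ(b)), some possibly identical, such that (♠) every I_i satisfies the constraints relevant to T(b), and (♣) f|_b = (1/M) Σ_{i=1}^M I_i. -/
variable {n : ℕ}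

/-! ### Auxiliary machinery for the proof -/

-- basic config lemmas
lemma mem_configs_iff {Q : CSPInstance n} {W : Finset (Fin n)} {K : Fin n → Option ℝ} :
    K ∈ configs Q W ↔
      (∀ v, (v ∈ W → ∃ r ∈ Q.dom v, K v = some r) ∧ (v ∉ W → K v = none)) ∧
      ∀ C ∈ Q.hard, C.scope ⊆ W → C.sat (fun v => (K v).getD 0) := by
  classical
  unfold configs
  rw [Finset.mem_filter, Fintype.mem_piFinset]
  constructor
  · rintro ⟨h1, h2⟩
    refine ⟨fun v => ⟨fun hv => ?_, fun hv => ?_⟩, h2⟩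
    · have := h1 v; rw [if_pos hv] at this
      rcases Finset.mem_image.1 this with ⟨r, hr, hrK⟩
      exact ⟨r, hr, hrK.symm⟩
    · have := h1 v; rw [if_neg hv] at this
      simpa using this
  · rintro ⟨h1, h2⟩
    refine ⟨fun v => ?_, h2⟩
    by_cases hv : v ∈ W
    · rw [if_pos hv]
      rcases (h1 v).1 hv with ⟨r, hr, hrK⟩
      exact Finset.mem_image.2 ⟨r, hr, hrK.symm⟩
    · rw [if_neg hv]; simp [(h1 v).2 hv]

lemma config_none_iff {Q : CSPInstance n} {W : Finset (Fin n)} {K : Fin n → Option ℝ}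
    (hK : K ∈ configs Q W) (v : Fin n) : K v = none ↔ v ∉ W := by
  rcases mem_configs_iff.1 hK with ⟨h1, -⟩
  constructor
  · intro h hv
    rcases (h1 v).1 hv with ⟨r, -, hr⟩
    rw [h] at hr; cases hr
  · exact (h1 v).2

lemma restrict_mem_configs {Q : CSPInstance n} {W W' : Finset (Fin n)}
    {K : Fin n → Option ℝ} (hWW : W ⊆ W') (hK : K ∈ configs Q W') :
    restrictCfg K W ∈ configs Q W := by
  rcases mem_configs_iff.1 hK with ⟨h1, h2⟩
  refine mem_configs_iff.2 ⟨fun v => ⟨fun hv => ?_, fun hv => ?_⟩, fun C hC hCW => ?_⟩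
  · rcases (h1 v).1 (hWW hv) with ⟨r, hr, hrK⟩
    exact ⟨r, hr, by rw [restrictCfg, if_pos hv]; exact hrK⟩
  · rw [restrictCfg, if_neg hv]
  · refine C.sat_congr _ _ (fun v hv => ?_) (h2 C hC (hCW.trans hWW))
    rw [restrictCfg, if_pos (hCW hv)]

-- cfgOf and ind
open Classical in
noncomputable def cfgOf (z : Fin n → ℝ) (W : Finset (Fin n)) : Fin n → Option ℝ :=
  fun v => if v ∈ W then some (z v) else none

open Classical in
noncomputable def ind (z : Fin n → ℝ) (K : Fin n → Option ℝ) : ℝ :=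
  if ∀ v, K v ≠ none → K v = some (z v) then 1 else 0

lemma restrict_cfgOf {z : Fin n → ℝ} {W W' : Finset (Fin n)} (h : W ⊆ W') :
    restrictCfg (cfgOf z W') W = cfgOf z W := by
  funext v
  by_cases hv : v ∈ W
  · rw [restrictCfg, if_pos hv, cfgOf, cfgOf, if_pos (h hv), if_pos hv]
  · rw [restrictCfg, if_neg hv, cfgOf, if_neg hv]

lemma cfgOf_congr {z z' : Fin n → ℝ} {W : Finset (Fin n)} (h : ∀ v ∈ W, z v = z' v) :
    cfgOf z W = cfgOf z' W := by
  funext v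
  by_cases hv : v ∈ W
  · rw [cfgOf, cfgOf, if_pos hv, if_pos hv, h v hv]
  · rw [cfgOf, cfgOf, if_neg hv, if_neg hv]

lemma ind_congr {z z' : Fin n → ℝ} {K : Fin n → Option ℝ}
    (h : ∀ v, K v ≠ none → z v = z' v) : ind z K = ind z' K := by
  unfold ind
  congr 1
  apply propext
  constructor <;> intro hh v hv
  · rw [hh v hv]; rw [h v hv]
  · rw [hh v hv]; rw [h v hv]

lemma ind_eq {Q : CSPInstance n} {W : Finset (Fin n)} {z : Fin n → ℝ}
    {K : Fin n → Option ℝ} (hK : K ∈ configs Q W) :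
    ind z K = if K = cfgOf z W then 1 else 0 := by
  unfold ind
  congr 1
  apply propext
  constructor
  · intro h
    funext v
    by_cases hv : v ∈ W
    · have hne : K v ≠ none := by
        rw [Ne, config_none_iff hK]; exact fun h' => h' hv
      rw [h v hne, cfgOf, if_pos hv]
    · rw [(config_none_iff hK v).2 hv, cfgOf, if_neg hv]
  · intro h v hv
    rw [h] at hv ⊢
    rw [cfgOf] at hv ⊢
    by_cases hvW : v ∈ W
    · rw [if_pos hvW]
    · exact absurd (if_neg hvW) hv

lemma ind_binary (z : Fin n → ℝ) (K : Fin n → Option ℝ) : ind z K = 0 ∨ ind z K = 1 := by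
  unfold ind; split <;> simp


namespace NiceTree
lemma isSubtree_self (b : NiceTree n) : b.isSubtree b := by
  cases b <;> simp [isSubtree]

lemma bag_subset_verts (b : NiceTree n) : b.bag ⊆ b.verts := by
  induction b with
  | leaf v => simp [bag, verts]
  | introduce v t ih => simpa [bag, verts] using Finset.insert_subset_insert v ih
  | forget v t ih => exact ((bag t).erase_subset v).trans ih
  | join t₁ t₂ ih₁ ih₂ => exact ih₁.trans Finset.subset_union_left

lemma verts_subset_of_subtree {s b : NiceTree n} (h : s.isSubtree b) : s.verts ⊆ b.verts := by
  induction b with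
  | leaf v => cases h; exact Finset.Subset.refl _
  | introduce v t ih =>
      rcases h with h | h
      · subst h; exact Finset.Subset.refl _
      · exact (ih h).trans (Finset.subset_insert _ _)
  | forget v t ih =>
      rcases h with h | h
      · subst h; exact Finset.Subset.refl _
      · exact ih h
  | join t₁ t₂ ih₁ ih₂ =>
      rcases h with h | h | h
      · subst h; exact Finset.Subset.refl _
      · exact (ih₁ h).trans Finset.subset_union_left
      · exact (ih₂ h).trans Finset.subset_union_right

lemma valid_of_subtree {s b : NiceTree n} (h : s.isSubtree b) (hb : b.valid) : s.valid := by
  induction b with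
  | leaf v => cases h; exact hb
  | introduce v t ih =>
      rcases h with h | h
      · subst h; exact hb
      · exact ih h hb.2
  | forget v t ih =>
      rcases h with h | h
      · subst h; exact hb
      · exact ih h hb.2
  | join t₁ t₂ ih₁ ih₂ =>
      rcases h with h | h | h
      · subst h; exact hb
      · exact ih₁ h hb.2.2.1
      · exact ih₂ h hb.2.2.2

lemma relConfigs_subset_of_subtree {Q : CSPInstance n} {s b : NiceTree n}
    (h : s.isSubtree b) : s.relConfigs Q ⊆ b.relConfigs Q := by
  induction b with
  | leaf v => cases h; exact Finset.Subset.refl _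
  | introduce v t ih =>
      rcases h with h | h
      · subst h; exact Finset.Subset.refl _
      · exact (ih h).trans (by rw [relConfigs]; exact Finset.subset_union_right)
  | forget v t ih =>
      rcases h with h | h
      · subst h; exact Finset.Subset.refl _
      · exact (ih h).trans (by rw [relConfigs]; exact Finset.subset_union_right)
  | join t₁ t₂ ih₁ ih₂ =>
      rcases h with h | h | h
      · subst h; exact Finset.Subset.refl _
      · exact (ih₁ h).trans (by rw [relConfigs]; exact Finset.subset_union_left)
      · exact (ih₂ h).trans (by rw [relConfigs]; exact Finset.subset_union_right)

lemma configs_bag_subset_relConfigs (Q : CSPInstance n) (b : NiceTree n) :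
    configs Q b.bag ⊆ b.relConfigs Q := by
  induction b with
  | leaf v => rw [relConfigs, bag]
  | introduce v t ih => rw [relConfigs, bag]; exact Finset.subset_union_left
  | forget v t ih => rw [relConfigs, bag]; exact Finset.subset_union_left
  | join t₁ t₂ ih₁ ih₂ =>
      rw [relConfigs, bag]
      exact ih₁.trans Finset.subset_union_left

lemma exists_subtree_of_mem_relConfigs {Q : CSPInstance n} {b : NiceTree n}
    {K : Fin n → Option ℝ} (h : K ∈ b.relConfigs Q) :
    ∃ s : NiceTree n, s.isSubtree b ∧ K ∈ configs Q s.bag := by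
  induction b with
  | leaf v => exact ⟨leaf v, isSubtree_self _, h⟩
  | introduce v t ih =>
      rw [relConfigs, Finset.mem_union] at h
      rcases h with h | h
      · exact ⟨introduce v t, isSubtree_self _, h⟩
      · rcases ih h with ⟨s, hs, hK⟩
        exact ⟨s, Or.inr hs, hK⟩
  | forget v t ih =>
      rw [relConfigs, Finset.mem_union] at h
      rcases h with h | h
      · exact ⟨forget v t, isSubtree_self _, h⟩
      · rcases ih h with ⟨s, hs, hK⟩
        exact ⟨s, Or.inr hs, hK⟩
  | join t₁ t₂ ih₁ ih₂ =>
      rw [relConfigs, Finset.mem_union] at h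
      rcases h with h | h
      · rcases ih₁ h with ⟨s, hs, hK⟩
        exact ⟨s, Or.inr (Or.inl hs), hK⟩
      · rcases ih₂ h with ⟨s, hs, hK⟩
        exact ⟨s, Or.inr (Or.inr hs), hK⟩

end NiceTree

lemma RelCons_of_subtree {Q : CSPInstance n} {f : (Fin n → Option ℝ) → ℝ}
    {s b : NiceTree n} (h : s.isSubtree b) (hb : RelCons Q f b) : RelCons Q f s := by
  induction b with
  | leaf v => cases h; exact hb
  | introduce v t ih =>
      rcases h with h | h
      · subst h; exact hb
      · exact ih h hb.1
  | forget v t ih =>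
      rcases h with h | h
      · subst h; exact hb
      · exact ih h hb.1
  | join t₁ t₂ ih₁ ih₂ =>
      rcases h with h | h | h
      · subst h; exact hb
      · exact ih₁ h hb.1
      · exact ih₂ h hb.2

lemma RelCons_affine {Q : CSPInstance n} {f g : (Fin n → Option ℝ) → ℝ}
    {a b : ℝ} (hab : a + b = 1) (t : NiceTree n)
    (hf : RelCons Q f t) (hg : RelCons Q g t) :
    RelCons Q (fun K => a * f K + b * g K) t := by
  induction t with
  | leaf v =>
      rw [RelCons] at hf hg ⊢
      rw [Finset.sum_add_distrib, ← Finset.mul_sum, ← Finset.mul_sum, hf, hg]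
      simpa using hab
  | introduce v t ih =>
      refine ⟨ih hf.1 hg.1, ?_, ?_⟩
      · rw [Finset.sum_add_distrib, ← Finset.mul_sum, ← Finset.mul_sum, hf.2.1, hg.2.1]
        simpa using hab
      · intro K hK
        rw [Finset.sum_add_distrib, ← Finset.mul_sum, ← Finset.mul_sum,
          hf.2.2 K hK, hg.2.2 K hK]
  | forget v t ih =>
      refine ⟨ih hf.1 hg.1, ?_, ?_⟩
      · rw [Finset.sum_add_distrib, ← Finset.mul_sum, ← Finset.mul_sum, hf.2.1, hg.2.1]
        simpa using hab
      · intro K hK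
        rw [Finset.sum_add_distrib, ← Finset.mul_sum, ← Finset.mul_sum,
          hf.2.2 K hK, hg.2.2 K hK]
  | join t₁ t₂ ih₁ ih₂ => exact ⟨ih₁ hf.1 hg.1, ih₂ hf.2 hg.2⟩

open NiceTree in
lemma RelCons_ind {Q : CSPInstance n} {z : Fin n → ℝ} {b : NiceTree n}
    (hcf : ∀ s : NiceTree n, s.isSubtree b → cfgOf z s.bag ∈ configs Q s.bag) :
    RelCons Q (ind z) b := by
  classical
  induction b with
  | leaf v =>
      rw [RelCons]
      have hmem : cfgOf z ({v} : Finset (Fin n)) ∈ configs Q {v} := by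
        simpa [bag] using hcf (leaf v) (isSubtree_self _)
      rw [Finset.sum_congr rfl (fun K hK => ind_eq (Q := Q) (W := {v}) hK)]
      rw [Finset.sum_ite_eq' (configs Q {v}) (cfgOf z {v}) (fun _ => (1:ℝ))]
      rw [if_pos hmem]
  | introduce v t ih =>
      have hmem : cfgOf z (insert v t.bag) ∈ configs Q (insert v t.bag) := by
        simpa [bag] using hcf (introduce v t) (isSubtree_self _)
      refine ⟨ih (fun s hs => hcf s (Or.inr hs)), ?_, ?_⟩
      · rw [Finset.sum_congr rfl (fun K hK => ind_eq (Q := Q) (W := insert v t.bag) hK)]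
        rw [Finset.sum_ite_eq' (configs Q (insert v t.bag)) _ (fun _ => (1:ℝ)), if_pos hmem]
      · intro K hK
        rw [Finset.sum_congr rfl
          (fun K' hK' => ind_eq (Q := Q) (W := insert v t.bag) (Finset.mem_filter.1 hK').1)]
        rw [ind_eq (Q := Q) (W := t.bag) hK]
        rw [Finset.sum_ite_eq' _ (cfgOf z (insert v t.bag)) (fun _ => (1:ℝ))]
        have hrest : restrictCfg (cfgOf z (insert v t.bag)) t.bag = cfgOf z t.bag :=
          restrict_cfgOf (Finset.subset_insert v t.bag)
        by_cases h : K = cfgOf z t.bag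
        · rw [if_pos (Finset.mem_filter.2 ⟨hmem, by rw [hrest, h]⟩), if_pos h]
        · rw [if_neg (fun hc => h (by
            have := (Finset.mem_filter.1 hc).2
            rw [hrest] at this
            exact this.symm)), if_neg h]
  | forget v t ih =>
      have hmemt : cfgOf z t.bag ∈ configs Q t.bag := by
        simpa [bag] using hcf t (Or.inr (isSubtree_self _))
      refine ⟨ih (fun s hs => hcf s (Or.inr hs)), ?_, ?_⟩
      · have hmem : cfgOf z (t.bag.erase v) ∈ configs Q (t.bag.erase v) := by
          simpa [bag] using hcf (forget v t) (isSubtree_self _)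
        rw [Finset.sum_congr rfl (fun K hK => ind_eq (Q := Q) (W := t.bag.erase v) hK)]
        rw [Finset.sum_ite_eq' (configs Q (t.bag.erase v)) _ (fun _ => (1:ℝ)), if_pos hmem]
      · intro K hK
        rw [Finset.sum_congr rfl
          (fun K' hK' => ind_eq (Q := Q) (W := t.bag) (Finset.mem_filter.1 hK').1)]
        rw [ind_eq (Q := Q) (W := t.bag.erase v) hK]
        rw [Finset.sum_ite_eq' _ (cfgOf z t.bag) (fun _ => (1:ℝ))]
        have hrest : restrictCfg (cfgOf z t.bag) (t.bag.erase v) = cfgOf z (t.bag.erase v) :=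
          restrict_cfgOf (t.bag.erase_subset v)
        by_cases h : K = cfgOf z (t.bag.erase v)
        · rw [if_pos (Finset.mem_filter.2 ⟨hmemt, by rw [hrest, h]⟩), if_pos h]
        · rw [if_neg (fun hc => h (by
            have := (Finset.mem_filter.1 hc).2
            rw [hrest] at this
            exact this.symm)), if_neg h]
  | join t₁ t₂ ih₁ ih₂ =>
      exact ⟨ih₁ (fun s hs => hcf s (Or.inr (Or.inl hs))),
        ih₂ (fun s hs => hcf s (Or.inr (Or.inr hs)))⟩

section Counting
open Finset

variable {ι α β : Type*} [Fintype ι]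

lemma exists_fiber_card [DecidableEq β] (t : Finset β) (m : β → ℕ)
    (hcard : Fintype.card ι = ∑ b ∈ t, m b) :
    ∃ h : ι → β, (∀ i, h i ∈ t) ∧
      ∀ b ∈ t, (Finset.univ.filter (fun i => h i = b)).card = m b := by
  classical
  have hc : Fintype.card ι = Fintype.card (Σ b : {x // x ∈ t}, Fin (m b.1)) := by
    rw [Fintype.card_sigma]
    simp only [Fintype.card_fin]
    rw [hcard, ← Finset.sum_coe_sort t m]
  obtain ⟨e⟩ : Nonempty (ι ≃ Σ b : {x // x ∈ t}, Fin (m b.1)) :=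
    ⟨Fintype.equivOfCardEq hc⟩
  refine ⟨fun i => (e i).1.1, fun i => (e i).1.2, fun b hb => ?_⟩
  rw [Finset.card_filter]
  rw [← Equiv.sum_comp e.symm (fun i => if (e i).1.1 = b then 1 else 0)]
  simp only [Equiv.apply_symm_apply]
  rw [← Finset.univ_sigma_univ, Finset.sum_sigma]
  have step : ∀ c : {x // x ∈ t}, (∑ _j : Fin (m c.1), if c.1 = b then 1 else 0)
      = if c.1 = b then m c.1 else 0 := by
    intro c
    by_cases h : c.1 = b <;> simp [h]
  rw [Finset.sum_congr rfl (fun c _ => step c)]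
  rw [Finset.sum_coe_sort t (fun c => if c = b then m c else 0)]
  rw [Finset.sum_ite_eq' t b m, if_pos hb]

lemma exists_refine [DecidableEq α] [DecidableEq β] [Nonempty β]
    (g : ι → α) (s : Finset α) (t : Finset β) (π : β → α) (m : β → ℕ)
    (hg : ∀ i, g i ∈ s) (hπ : ∀ b ∈ t, π b ∈ s)
    (hcount : ∀ a ∈ s, (Finset.univ.filter (fun i => g i = a)).card
      = ∑ b ∈ t.filter (fun b => π b = a), m b) :
    ∃ h : ι → β, (∀ i, h i ∈ t ∧ π (h i) = g i) ∧
      ∀ b ∈ t, (Finset.univ.filter (fun i => h i = b)).card = m b := by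
  classical
  have aux : ∀ a : α, ∃ ha : ι → β, a ∈ s →
      ((∀ i, g i = a → ha i ∈ t ∧ π (ha i) = a) ∧
       ∀ b ∈ t, π b = a →
         (Finset.univ.filter (fun i => g i = a ∧ ha i = b)).card = m b) := by
    intro a
    by_cases has : a ∈ s
    swap
    · exact ⟨fun _ => Classical.arbitrary β, fun h => absurd h has⟩
    have hcard : Fintype.card {i // g i = a} = ∑ b ∈ t.filter (fun b => π b = a), m b := by
      rw [Fintype.card_subtype, hcount a has]
    obtain ⟨h', hh'mem, hh'count⟩ := exists_fiber_card (ι := {i // g i = a})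
      (t.filter (fun b => π b = a)) m hcard
    refine ⟨fun i => if hi : g i = a then h' ⟨i, hi⟩ else Classical.arbitrary β,
      fun _ => ⟨fun i hi => ?_, fun b hb hπb => ?_⟩⟩
    · dsimp only
      rw [dif_pos hi]
      have := hh'mem ⟨i, hi⟩
      rw [Finset.mem_filter] at this
      exact ⟨this.1, this.2⟩
    · have hcnt := hh'count b (Finset.mem_filter.2 ⟨hb, hπb⟩)
      rw [← hcnt]
      rw [← Fintype.card_subtype, ← Fintype.card_subtype]
      apply Fintype.card_congr
      refine ⟨fun x => ⟨⟨x.1, x.2.1⟩, ?_⟩, fun y => ⟨y.1.1, y.1.2, ?_⟩, ?_, ?_⟩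
      · obtain ⟨i, hi1, hi2⟩ := x
        dsimp only at hi2 ⊢
        rw [dif_pos hi1] at hi2
        exact hi2
      · dsimp only
        rw [dif_pos y.1.2]
        exact congrArg h' (Subtype.ext rfl) |>.trans y.2
      · intro x; rfl
      · intro y; rfl
  choose H hH using aux
  refine ⟨fun i => H (g i) i, fun i => (hH (g i) (hg i)).1 i rfl, fun b hb => ?_⟩
  have hπb : π b ∈ s := hπ b hb
  have hfe : Finset.univ.filter (fun i => H (g i) i = b)
      = Finset.univ.filter (fun i => g i = π b ∧ H (π b) i = b) := by
    ext i
    simp only [Finset.mem_filter, Finset.mem_univ, true_and]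
    constructor
    · intro hi
      have h2 := ((hH (g i) (hg i)).1 i rfl).2
      rw [hi] at h2
      exact ⟨h2.symm, by rw [h2]; exact hi⟩
    · rintro ⟨h1, h2⟩
      rw [h1]; exact h2
  rw [hfe]
  exact (hH (π b) hπb).2 b hb rfl

lemma exists_perm_of_fiber_card [DecidableEq α] (g₁ g₂ : ι → α)
    (hcount : ∀ a : α, (Finset.univ.filter (fun i => g₁ i = a)).card
      = (Finset.univ.filter (fun i => g₂ i = a)).card) :
    ∃ σ : Equiv.Perm ι, ∀ i, g₂ (σ i) = g₁ i := by
  classical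
  have hne : ∀ a : α, Nonempty ({i // g₁ i = a} ≃ {i // g₂ i = a}) := by
    intro a
    refine ⟨Fintype.equivOfCardEq ?_⟩
    rw [Fintype.card_subtype, Fintype.card_subtype, hcount a]
  let e : ∀ a : α, {i // g₁ i = a} ≃ {i // g₂ i = a} := fun a => (hne a).some
  let σ : ι ≃ ι :=
    ((Equiv.sigmaFiberEquiv g₁).symm.trans (Equiv.sigmaCongrRight e)).trans
      (Equiv.sigmaFiberEquiv g₂)
  refine ⟨σ, fun i => ?_⟩
  show g₂ ((Equiv.sigmaFiberEquiv g₂) ((Equiv.sigmaCongrRight e)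
    ((Equiv.sigmaFiberEquiv g₁).symm i))) = g₁ i
  have h1 : (Equiv.sigmaFiberEquiv g₁).symm i = ⟨g₁ i, ⟨i, rfl⟩⟩ := by
    apply (Equiv.sigmaFiberEquiv g₁).injective
    simp [Equiv.sigmaFiberEquiv]
  rw [h1]
  exact (e (g₁ i) ⟨i, rfl⟩).2

end Counting

section MainInduction
open NiceTree

lemma cfgOf_getD {Q : CSPInstance n} {W : Finset (Fin n)} {K : Fin n → Option ℝ}
    (hK : K ∈ configs Q W) : cfgOf (fun w => (K w).getD 0) W = K := by
  funext w
  by_cases hw : w ∈ W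
  · rcases (mem_configs_iff.1 hK).1 w |>.1 hw with ⟨r, -, hr⟩
    rw [cfgOf, if_pos hw, hr]
    rfl
  · rw [cfgOf, if_neg hw, ((config_none_iff hK w).2 hw)]

lemma sum_ind_eq_card {Q : CSPInstance n} {W : Finset (Fin n)} {K : Fin n → Option ℝ}
    (hK : K ∈ configs Q W) {M : ℕ} (z : Fin M → (Fin n → ℝ)) :
    ∑ i, ind (z i) K
      = ((Finset.univ.filter (fun i => cfgOf (z i) W = K)).card : ℝ) := by
  classical
  rw [Finset.sum_congr rfl (fun i _ => ind_eq (Q := Q) (W := W) hK)]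
  rw [Finset.sum_boole]
  have hfe : (Finset.univ.filter (fun i => K = cfgOf (z i) W))
      = Finset.univ.filter (fun i => cfgOf (z i) W = K) := by
    ext i
    simp [eq_comm]
  rw [hfe]

lemma ind_congr_of_relConfigs {Q : CSPInstance n} {b : NiceTree n} {K : Fin n → Option ℝ}
    (hK : K ∈ b.relConfigs Q) {z z' : Fin n → ℝ}
    (h : ∀ w ∈ b.verts, z w = z' w) : ind z K = ind z' K := by
  obtain ⟨s, hs, hKc⟩ := exists_subtree_of_mem_relConfigs hK
  apply ind_congr
  intro w hw
  have hwb : w ∈ s.bag := by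
    by_contra hns
    exact hw ((config_none_iff hKc w).2 hns)
  exact h w (verts_subset_of_subtree hs (bag_subset_verts s hwb))

lemma exists_assignment_family {Q : CSPInstance n} {f : (Fin n → Option ℝ) → ℝ}
    {M : ℕ} (mfn : (Fin n → Option ℝ) → ℕ)
    (b : NiceTree n) (hval : b.valid) (hRC : RelCons Q f b)
    (hint : ∀ K ∈ b.relConfigs Q, (M : ℝ) * f K = mfn K) :
    ∃ z : Fin M → (Fin n → ℝ),
      (∀ i, ∀ s : NiceTree n, s.isSubtree b → cfgOf (z i) s.bag ∈ configs Q s.bag) ∧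
      ∀ K ∈ b.relConfigs Q, (M : ℝ) * f K = ∑ i, ind (z i) K := by
  classical
  induction b with
  | leaf v =>
      have hrel : (leaf v : NiceTree n).relConfigs Q = configs Q {v} := rfl
      have hcard : Fintype.card (Fin M) = ∑ K ∈ configs Q {v}, mfn K := by
        have : ((∑ K ∈ configs Q {v}, mfn K : ℕ) : ℝ) = ((M : ℕ) : ℝ) := by
          push_cast
          rw [Finset.sum_congr rfl (fun K hK => (hint K (by rwa [hrel])).symm)]
          rw [← Finset.mul_sum]
          rw [show (∑ K ∈ configs Q {v}, f K) = 1 from hRC]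
          ring
        rw [Fintype.card_fin]
        exact (Nat.cast_injective this).symm
      obtain ⟨φ, hφmem, hφcount⟩ := exists_fiber_card (ι := Fin M) (configs Q {v}) mfn hcard
      refine ⟨fun i => fun w => ((φ i) w).getD 0, ?_, ?_⟩
      · intro i s hs
        cases hs
        show cfgOf _ ({v} : Finset (Fin n)) ∈ configs Q {v}
        rw [cfgOf_getD (hφmem i)]
        exact hφmem i
      · intro K hK
        rw [hrel] at hK
        rw [sum_ind_eq_card hK]
        have hfe : (Finset.univ.filter (fun i => cfgOf (fun w => ((φ i) w).getD 0) {v} = K))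
            = Finset.univ.filter (fun i => φ i = K) := by
          ext i
          simp only [Finset.mem_filter, Finset.mem_univ, true_and]
          rw [cfgOf_getD (hφmem i)]
        rw [hfe, hφcount K hK, hint K (by rwa [hrel])]
  | introduce v t ih =>
      obtain ⟨hvnot, hvalt⟩ := hval
      obtain ⟨hRCt, hbagEq, hcons⟩ := hRC
      have hrel : (introduce v t).relConfigs Q
          = configs Q (insert v t.bag) ∪ t.relConfigs Q := rfl
      have hsubrel : t.relConfigs Q ⊆ (introduce v t).relConfigs Q := by
        rw [hrel]; exact Finset.subset_union_right
      have hsubrel' : configs Q (insert v t.bag) ⊆ (introduce v t).relConfigs Q := by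
        rw [hrel]; exact Finset.subset_union_left
      obtain ⟨z, hinv, hcnt⟩ := ih hvalt hRCt (fun K hK => hint K (hsubrel hK))
      set g : Fin M → (Fin n → Option ℝ) := fun i => cfgOf (z i) t.bag with hg
      have hgmem : ∀ i, g i ∈ configs Q t.bag := fun i => hinv i t (isSubtree_self t)
      have hvnb : v ∉ t.bag := fun h => hvnot (bag_subset_verts t h)
      -- counting hypotheses for refinement
      have hcount : ∀ a ∈ configs Q t.bag,
          (Finset.univ.filter (fun i => g i = a)).card
            = ∑ K' ∈ (configs Q (insert v t.bag)).filter
                (fun K' => restrictCfg K' t.bag = a), mfn K' := by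
        intro a ha
        have h1 : ((Finset.univ.filter (fun i => g i = a)).card : ℝ)
            = (M : ℝ) * f a := by
          rw [← sum_ind_eq_card ha z, (hcnt a (configs_bag_subset_relConfigs Q t ha))]
        have h2 : ((∑ K' ∈ (configs Q (insert v t.bag)).filter
              (fun K' => restrictCfg K' t.bag = a), mfn K' : ℕ) : ℝ) = (M : ℝ) * f a := by
          push_cast
          rw [Finset.sum_congr rfl (fun K' hK' =>
            (hint K' (hsubrel' (Finset.mem_filter.1 hK').1)).symm)]
          rw [← Finset.mul_sum, hcons a ha]
        exact Nat.cast_injective (h1.trans h2.symm)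
      obtain ⟨h, hhmem, hhcount⟩ := exists_refine (ι := Fin M) g (configs Q t.bag)
        (configs Q (insert v t.bag)) (fun K' => restrictCfg K' t.bag) mfn
        hgmem (fun K' hK' => restrict_mem_configs (Finset.subset_insert v t.bag) hK') hcount
      set z' : Fin M → (Fin n → ℝ) :=
        fun i => Function.update (z i) v (((h i) v).getD 0) with hz'
      have hagree : ∀ i, ∀ w ∈ t.verts, z' i w = z i w := by
        intro i w hw
        have : w ≠ v := fun hwv => hvnot (hwv ▸ hw)
        rw [hz']
        exact Function.update_of_ne this _ _
      have hcfg' : ∀ i, cfgOf (z' i) (insert v t.bag) = h i := by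
        intro i
        funext w
        by_cases hw : w ∈ insert v t.bag
        · rcases Finset.mem_insert.1 hw with hwv | hwb
          · subst hwv
            rcases (mem_configs_iff.1 (hhmem i).1).1 w |>.1 (Finset.mem_insert_self w _)
              with ⟨r, -, hr⟩
            rw [cfgOf, if_pos hw, hz']
            dsimp only
            rw [Function.update_self, hr]
            rfl
          · have hwv : w ≠ v := fun hwv => hvnb (hwv ▸ hwb)
            have h1 : h i w = g i w := by
              have := congrFun (hhmem i).2 w
              rwa [restrictCfg, if_pos hwb] at this
            have h2 : h i w = some (z i w) := by
              rw [h1, hg]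
              simp only [cfgOf, if_pos hwb]
            rw [cfgOf, if_pos hw, hz']
            dsimp only
            rw [Function.update_of_ne hwv, h2]
        · rw [cfgOf, if_neg hw, (config_none_iff (hhmem i).1 w).2 hw]
      have hpres : ∀ i, ∀ s : NiceTree n, s.isSubtree t →
          cfgOf (z' i) s.bag = cfgOf (z i) s.bag := by
        intro i s hs
        exact cfgOf_congr (fun w hw => hagree i w
          (verts_subset_of_subtree hs (bag_subset_verts s hw)))
      refine ⟨z', ?_, ?_⟩
      · intro i s hs
        rcases hs with rfl | hs
        · show cfgOf (z' i) (insert v t.bag) ∈ configs Q (insert v t.bag)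
          rw [hcfg' i]
          exact (hhmem i).1
        · rw [hpres i s hs]
          exact hinv i s hs
      · intro K hK
        rw [hrel, Finset.mem_union] at hK
        rcases hK with hK | hK
        · rw [sum_ind_eq_card hK z']
          have hfe : (Finset.univ.filter (fun i => cfgOf (z' i) (insert v t.bag) = K))
              = Finset.univ.filter (fun i => h i = K) := by
            ext i
            simp only [Finset.mem_filter, Finset.mem_univ, true_and]
            rw [hcfg' i]
          rw [hfe, hhcount K hK, hint K (hsubrel' hK)]
        · rw [Finset.sum_congr rfl (fun i _ =>
            (ind_congr_of_relConfigs hK (fun w hw => hagree i w hw)))]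
          exact hcnt K hK
  | forget v t ih =>
      obtain ⟨hvbag, hvalt⟩ := hval
      obtain ⟨hRCt, hbagEq, hcons⟩ := hRC
      have hrel : (forget v t).relConfigs Q
          = configs Q (t.bag.erase v) ∪ t.relConfigs Q := rfl
      have hsubrel : t.relConfigs Q ⊆ (forget v t).relConfigs Q := by
        rw [hrel]; exact Finset.subset_union_right
      obtain ⟨z, hinv, hcnt⟩ := ih hvalt hRCt (fun K hK => hint K (hsubrel hK))
      have hesub : t.bag.erase v ⊆ t.bag := t.bag.erase_subset v
      refine ⟨z, ?_, ?_⟩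
      · intro i s hs
        rcases hs with rfl | hs
        · show cfgOf (z i) (t.bag.erase v) ∈ configs Q (t.bag.erase v)
          rw [← restrict_cfgOf hesub]
          exact restrict_mem_configs hesub (hinv i t (isSubtree_self t))
        · exact hinv i s hs
      · intro K hK
        rw [hrel, Finset.mem_union] at hK
        rcases hK with hK | hK
        · -- per-i decomposition over the filter
          have key : ∀ i, ind (z i) K
              = ∑ K' ∈ (configs Q t.bag).filter
                  (fun K' => restrictCfg K' (t.bag.erase v) = K), ind (z i) K' := by
            intro i
            have hmemt : cfgOf (z i) t.bag ∈ configs Q t.bag := hinv i t (isSubtree_self t)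
            rw [Finset.sum_congr rfl (fun K' hK' =>
              ind_eq (Q := Q) (W := t.bag) (Finset.mem_filter.1 hK').1)]
            rw [ind_eq (Q := Q) (W := t.bag.erase v) hK]
            rw [Finset.sum_ite_eq' _ (cfgOf (z i) t.bag) (fun _ => (1:ℝ))]
            have hrest : restrictCfg (cfgOf (z i) t.bag) (t.bag.erase v)
                = cfgOf (z i) (t.bag.erase v) := restrict_cfgOf hesub
            by_cases hc : K = cfgOf (z i) (t.bag.erase v)
            · rw [if_pos hc, if_pos (Finset.mem_filter.2 ⟨hmemt, by rw [hrest, hc]⟩)]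
            · rw [if_neg hc, if_neg (fun hm => hc (by
                have := (Finset.mem_filter.1 hm).2
                rw [hrest] at this
                exact this.symm))]
          rw [Finset.sum_congr rfl (fun i _ => key i)]
          rw [Finset.sum_comm]
          rw [Finset.sum_congr rfl (fun K' hK' => (hcnt K'
            (configs_bag_subset_relConfigs Q t (Finset.mem_filter.1 hK').1)).symm)]
          rw [← Finset.mul_sum, hcons K hK]
        · exact hcnt K hK
  | join t₁ t₂ ih₁ ih₂ =>
      obtain ⟨hbags, hcap, hval₁, hval₂⟩ := hval
      obtain ⟨hRC₁, hRC₂⟩ := hRC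
      have hrel : (join t₁ t₂).relConfigs Q = t₁.relConfigs Q ∪ t₂.relConfigs Q := rfl
      have hsub₁ : t₁.relConfigs Q ⊆ (join t₁ t₂).relConfigs Q := by
        rw [hrel]; exact Finset.subset_union_left
      have hsub₂ : t₂.relConfigs Q ⊆ (join t₁ t₂).relConfigs Q := by
        rw [hrel]; exact Finset.subset_union_right
      obtain ⟨z₁, hinv₁, hcnt₁⟩ := ih₁ hval₁ hRC₁ (fun K hK => hint K (hsub₁ hK))
      obtain ⟨z₂, hinv₂, hcnt₂⟩ := ih₂ hval₂ hRC₂ (fun K hK => hint K (hsub₂ hK))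
      set g₁ : Fin M → (Fin n → Option ℝ) := fun i => cfgOf (z₁ i) t₁.bag with hg₁
      set g₂ : Fin M → (Fin n → Option ℝ) := fun i => cfgOf (z₂ i) t₁.bag with hg₂
      have hg₁mem : ∀ i, g₁ i ∈ configs Q t₁.bag := fun i => hinv₁ i t₁ (isSubtree_self t₁)
      have hg₂mem : ∀ i, g₂ i ∈ configs Q t₁.bag := by
        intro i
        have := hinv₂ i t₂ (isSubtree_self t₂)
        rwa [← hbags] at this
      have hcount : ∀ a, (Finset.univ.filter (fun i => g₁ i = a)).card
          = (Finset.univ.filter (fun i => g₂ i = a)).card := by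
        intro a
        by_cases ha : a ∈ configs Q t₁.bag
        · have h1 : ((Finset.univ.filter (fun i => g₁ i = a)).card : ℝ) = (M : ℝ) * f a := by
            rw [← sum_ind_eq_card ha z₁,
              hcnt₁ a (configs_bag_subset_relConfigs Q t₁ ha)]
          have ha₂ : a ∈ configs Q t₂.bag := by rwa [← hbags]
          have h2 : ((Finset.univ.filter (fun i => g₂ i = a)).card : ℝ) = (M : ℝ) * f a := by
            have := sum_ind_eq_card ha₂ z₂
            have hfe : (Finset.univ.filter (fun i => cfgOf (z₂ i) t₂.bag = a))
                = Finset.univ.filter (fun i => g₂ i = a) := by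
              ext i
              simp only [Finset.mem_filter, Finset.mem_univ, true_and, hg₂, ← hbags]
            rw [hfe] at this
            rw [← this, hcnt₂ a (configs_bag_subset_relConfigs Q t₂ ha₂)]
          exact Nat.cast_injective (h1.trans h2.symm)
        · have e1 : Finset.univ.filter (fun i => g₁ i = a) = ∅ := by
            apply Finset.filter_eq_empty_iff.2
            intro i _ hia
            exact ha (hia ▸ hg₁mem i)
          have e2 : Finset.univ.filter (fun i => g₂ i = a) = ∅ := by
            apply Finset.filter_eq_empty_iff.2
            intro i _ hia
            exact ha (hia ▸ hg₂mem i)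
          rw [e1, e2]
      obtain ⟨σ, hσ⟩ := exists_perm_of_fiber_card g₁ g₂ hcount
      set z : Fin M → (Fin n → ℝ) :=
        fun i w => if w ∈ t₁.verts then z₁ i w else z₂ (σ i) w with hzdef
      have hagree₁ : ∀ i, ∀ w ∈ t₁.verts, z i w = z₁ i w := by
        intro i w hw
        rw [hzdef]; exact if_pos hw
      have hagree₂ : ∀ i, ∀ w ∈ t₂.verts, z i w = z₂ (σ i) w := by
        intro i w hw
        by_cases hw1 : w ∈ t₁.verts
        · have hwB : w ∈ t₁.bag := hcap (Finset.mem_inter.2 ⟨hw1, hw⟩)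
          have := congrFun (hσ i) w
          simp only [hg₁, hg₂, cfgOf, if_pos hwB] at this
          have hzz : z₂ (σ i) w = z₁ i w := Option.some_injective _ this
          rw [hzdef]
          simp only [if_pos hw1]
          exact hzz.symm
        · rw [hzdef]; exact if_neg hw1
      have hcfg₁ : ∀ i, ∀ s : NiceTree n, s.isSubtree t₁ →
          cfgOf (z i) s.bag = cfgOf (z₁ i) s.bag := fun i s hs =>
        cfgOf_congr (fun w hw => hagree₁ i w
          (verts_subset_of_subtree hs (bag_subset_verts s hw)))
      have hcfg₂ : ∀ i, ∀ s : NiceTree n, s.isSubtree t₂ →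
          cfgOf (z i) s.bag = cfgOf (z₂ (σ i)) s.bag := fun i s hs =>
        cfgOf_congr (fun w hw => hagree₂ i w
          (verts_subset_of_subtree hs (bag_subset_verts s hw)))
      refine ⟨z, ?_, ?_⟩
      · intro i s hs
        rcases hs with rfl | hs | hs
        · show cfgOf (z i) t₁.bag ∈ configs Q t₁.bag
          rw [hcfg₁ i t₁ (isSubtree_self t₁)]
          exact hg₁mem i
        · rw [hcfg₁ i s hs]
          exact hinv₁ i s hs
        · rw [hcfg₂ i s hs]
          exact hinv₂ (σ i) s hs
      · intro K hK
        rw [hrel, Finset.mem_union] at hK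
        rcases hK with hK | hK
        · rw [Finset.sum_congr rfl (fun i _ =>
            (ind_congr_of_relConfigs hK (fun w hw => hagree₁ i w hw)))]
          exact hcnt₁ K hK
        · rw [Finset.sum_congr rfl (fun i _ =>
            (ind_congr_of_relConfigs hK (fun w hw => hagree₂ i w hw)))]
          rw [Equiv.sum_comp σ (fun j => ind (z₂ j) K)]
          exact hcnt₂ K hK

end MainInduction

section Rationality

variable {α : Type*}

noncomputable def elift (s : Finset α) (w : {K // K ∈ s} → ℚ) (x : {K // K ∈ s} → ℝ) : ℝ :=
  ∑ K, (w K : ℝ) * x K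

lemma elift_add (s : Finset α) (w w' : {K // K ∈ s} → ℚ) (x : {K // K ∈ s} → ℝ) :
    elift s (w + w') x = elift s w x + elift s w' x := by
  unfold elift
  rw [← Finset.sum_add_distrib]
  apply Finset.sum_congr rfl
  intro K _
  simp only [Pi.add_apply]
  push_cast
  ring

lemma elift_smul (s : Finset α) (c : ℚ) (w : {K // K ∈ s} → ℚ) (x : {K // K ∈ s} → ℝ) :
    elift s (c • w) x = c * elift s w x := by
  unfold elift
  rw [Finset.mul_sum]
  apply Finset.sum_congr rfl
  intro K _
  simp only [Pi.smul_apply, smul_eq_mul]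
  push_cast
  ring

lemma elift_zero (s : Finset α) (x : {K // K ∈ s} → ℝ) : elift s 0 x = 0 := by
  unfold elift
  apply Finset.sum_eq_zero
  intro K _
  simp

lemma rat_of_unique (s : Finset α) (L : Set (({K // K ∈ s} → ℚ) × ℚ))
    (x₀ : {K // K ∈ s} → ℝ)
    (hx₀ : ∀ p ∈ L, elift s p.1 x₀ = (p.2 : ℝ))
    (huniq : ∀ x : {K // K ∈ s} → ℝ, (∀ p ∈ L, elift s p.1 x = (p.2 : ℝ)) → x = x₀) :
    ∀ K, ∃ r : ℚ, x₀ K = (r : ℝ) := by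
  classical
  -- the real kernel is trivial
  have hker : ∀ y : {K // K ∈ s} → ℝ, (∀ p ∈ L, elift s p.1 y = 0) → y = 0 := by
    intro y hy
    have : ∀ p ∈ L, elift s p.1 (x₀ + y) = (p.2 : ℝ) := by
      intro p hp
      have hadd : elift s p.1 (x₀ + y) = elift s p.1 x₀ + elift s p.1 y := by
        unfold elift
        rw [← Finset.sum_add_distrib]
        apply Finset.sum_congr rfl
        intro K _
        simp [mul_add]
      rw [hadd, hx₀ p hp, hy p hp, add_zero]
    have := huniq (x₀ + y) this
    funext K
    have := congrFun this K
    simpa using this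
  -- the rational span of the coefficient vectors is everything
  set U : Submodule ℚ ({K // K ∈ s} → ℚ) := Submodule.span ℚ (Prod.fst '' L) with hU
  have hUtop : U = ⊤ := by
    by_contra hne
    obtain ⟨v, hv⟩ : ∃ v, v ∉ U := by
      by_contra hc
      push_neg at hc
      exact hne (Submodule.eq_top_iff'.2 hc)
    have hmkv : Submodule.Quotient.mk (p := U) v ≠ 0 := by
      rw [Ne, Submodule.Quotient.mk_eq_zero]
      exact hv
    have : ¬ (∀ φ : Module.Dual ℚ (({K // K ∈ s} → ℚ) ⧸ U),
        φ (Submodule.Quotient.mk v) = 0) := by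
      rw [Module.forall_dual_apply_eq_zero_iff]
      exact hmkv
    push_neg at this
    obtain ⟨φ, hφ⟩ := this
    set ψ : (({K // K ∈ s} → ℚ)) →ₗ[ℚ] ℚ := φ.comp U.mkQ with hψ
    have hψU : ∀ w ∈ U, ψ w = 0 := by
      intro w hw
      rw [hψ]
      simp only [LinearMap.comp_apply, Submodule.mkQ_apply]
      rw [(Submodule.Quotient.mk_eq_zero U).2 hw]
      exact φ.map_zero
    set y' : {K // K ∈ s} → ℚ := fun K => ψ (fun j => if K = j then 1 else 0) with hy'
    have hψeq : ∀ w, ψ w = ∑ K, w K * y' K := by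
      intro w
      rw [LinearMap.pi_apply_eq_sum_univ ψ w]
      apply Finset.sum_congr rfl
      intro K _
      rw [hy']
      simp [smul_eq_mul]
    have hy0 : (fun K => ((y' K : ℝ))) = 0 := by
      apply hker
      intro p hp
      have h1 : ψ p.1 = 0 := hψU p.1 (Submodule.subset_span ⟨p, hp, rfl⟩)
      rw [hψeq p.1] at h1
      unfold elift
      have : ((∑ K, p.1 K * y' K : ℚ) : ℝ) = 0 := by rw [h1]; simp
      rw [← this]
      push_cast
      rfl
    have hy'0 : y' = 0 := by
      funext K
      have := congrFun hy0 K
      simp only [Pi.zero_apply] at this ⊢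
      exact_mod_cast this
    have : φ (Submodule.Quotient.mk v) = 0 := by
      have := hψeq v
      rw [hy'0] at this
      simp only [Pi.zero_apply, mul_zero, Finset.sum_const_zero] at this
      rw [hψ] at this
      simpa using this
    exact hφ this
  -- conclude rationality coordinatewise
  intro K₀
  have hbase : ∀ w ∈ Prod.fst '' L, ∃ r : ℚ, elift s w x₀ = (r : ℝ) := by
    rintro w ⟨p, hp, rfl⟩
    exact ⟨p.2, hx₀ p hp⟩
  have hspan : ∀ w, w ∈ U → ∃ r : ℚ, elift s w x₀ = (r : ℝ) := by
    intro w hw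
    induction hw using Submodule.span_induction with
    | mem w hw => exact hbase _ hw
    | zero => exact ⟨0, by rw [elift_zero]; simp⟩
    | add w w' _ _ hw hw' =>
        obtain ⟨r, hr⟩ := hw
        obtain ⟨r', hr'⟩ := hw'
        exact ⟨r + r', by rw [elift_add, hr, hr']; push_cast; ring⟩
    | smul c w _ hw =>
        obtain ⟨r, hr⟩ := hw
        exact ⟨c * r, by rw [elift_smul, hr]; push_cast; ring⟩
  have hbK : (fun j => if K₀ = j then (1:ℚ) else 0) ∈ U := by
    rw [hUtop]; trivial
  obtain ⟨r, hr⟩ := hspan _ hbK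
  refine ⟨r, ?_⟩
  rw [← hr]
  unfold elift
  have hstep : ∀ K : {K // K ∈ s},
      (((if K₀ = K then (1:ℚ) else 0) : ℚ) : ℝ) * x₀ K = if K₀ = K then x₀ K else 0 := by
    intro K
    split <;> simp
  rw [Finset.sum_congr rfl (fun K _ => hstep K)]
  rw [Finset.sum_ite_eq Finset.univ K₀ x₀, if_pos (Finset.mem_univ K₀)]

end Rationality

section Eqns
open NiceTree

noncomputable def indw (s F : Finset (Fin n → Option ℝ)) : {K // K ∈ s} → ℚ :=
  fun K => if K.1 ∈ F then 1 else 0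

noncomputable def extx (s : Finset (Fin n → Option ℝ)) (x : {K // K ∈ s} → ℝ) :
    (Fin n → Option ℝ) → ℝ :=
  fun K => if h : K ∈ s then x ⟨K, h⟩ else 0

lemma extx_eq {s : Finset (Fin n → Option ℝ)} (x : {K // K ∈ s} → ℝ)
    {K : Fin n → Option ℝ} (hK : K ∈ s) : extx s x K = x ⟨K, hK⟩ := dif_pos hK

lemma elift_indw {s F : Finset (Fin n → Option ℝ)} (hF : F ⊆ s) (x : {K // K ∈ s} → ℝ) :
    elift s (indw s F) x = ∑ K ∈ F, extx s x K := by
  classical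
  unfold elift indw
  have step : ∀ K : {K // K ∈ s},
      (((if K.1 ∈ F then (1:ℚ) else 0) : ℚ) : ℝ) * x K
        = if K.1 ∈ F then extx s x K.1 else 0 := by
    intro K
    by_cases h : K.1 ∈ F
    · rw [if_pos h, if_pos h, extx_eq x K.2]
      simp
    · rw [if_neg h, if_neg h]
      simp
  rw [Finset.sum_congr rfl (fun K _ => step K)]
  rw [Finset.sum_coe_sort s (fun K => if K ∈ F then extx s x K else 0)]
  rw [Finset.sum_ite_mem s F (extx s x)]
  rw [Finset.inter_eq_right.2 hF]

lemma elift_single {s : Finset (Fin n → Option ℝ)} {K : Fin n → Option ℝ}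
    (hK : K ∈ s) (x : {K // K ∈ s} → ℝ) :
    elift s (indw s {K}) x = extx s x K := by
  rw [elift_indw (Finset.singleton_subset_iff.2 hK) x, Finset.sum_singleton]

lemma elift_sub (s : Finset (Fin n → Option ℝ)) (w w' : {K // K ∈ s} → ℚ)
    (x : {K // K ∈ s} → ℝ) :
    elift s (w - w') x = elift s w x - elift s w' x := by
  unfold elift
  rw [← Finset.sum_sub_distrib]
  apply Finset.sum_congr rfl
  intro K _
  simp only [Pi.sub_apply]
  push_cast
  ring

noncomputable def lpEqns (Q : CSPInstance n) (s : Finset (Fin n → Option ℝ)) :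
    NiceTree n → Set (({K // K ∈ s} → ℚ) × ℚ)
  | .leaf v => {(indw s (configs Q {v}), 1)}
  | .introduce v t => lpEqns Q s t ∪ {(indw s (configs Q (insert v t.bag)), 1)} ∪
      (fun K => (indw s ((configs Q (insert v t.bag)).filter
          (fun K' => restrictCfg K' t.bag = K)) - indw s {K}, (0:ℚ)))
        '' ↑(configs Q t.bag)
  | .forget v t => lpEqns Q s t ∪ {(indw s (configs Q (t.bag.erase v)), 1)} ∪
      (fun K => (indw s ((configs Q t.bag).filter
          (fun K' => restrictCfg K' (t.bag.erase v) = K)) - indw s {K}, (0:ℚ)))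
        '' ↑(configs Q (t.bag.erase v))
  | .join t₁ t₂ => lpEqns Q s t₁ ∪ lpEqns Q s t₂

lemma lpEqns_sound {Q : CSPInstance n} {s : Finset (Fin n → Option ℝ)} {b : NiceTree n}
    (hsub : b.relConfigs Q ⊆ s) (x : {K // K ∈ s} → ℝ)
    (hx : ∀ p ∈ lpEqns Q s b, elift s p.1 x = (p.2 : ℝ)) :
    RelCons Q (extx s x) b := by
  induction b with
  | leaf v =>
      have h := hx _ (Set.mem_singleton _)
      rw [elift_indw (F := configs Q {v}) hsub x] at h
      rw [RelCons]
      simpa using h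
  | introduce v t ih =>
      have hsubt : t.relConfigs Q ⊆ s := le_trans Finset.subset_union_right hsub
      have hsubB : configs Q (insert v t.bag) ⊆ s :=
        le_trans Finset.subset_union_left hsub
      refine ⟨ih hsubt (fun p hp => hx p (Or.inl (Or.inl hp))), ?_, ?_⟩
      · have h := hx _ (Or.inl (Or.inr (Set.mem_singleton _)))
        rw [elift_indw hsubB x] at h
        simpa using h
      · intro K hK
        have hKs : K ∈ s := hsubt (configs_bag_subset_relConfigs Q t hK)
        have h := hx _ (Or.inr (Set.mem_image_of_mem _ (Finset.mem_coe.2 hK)))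
        simp only at h
        rw [elift_sub, elift_indw ((Finset.filter_subset _ _).trans hsubB) x,
          elift_single hKs x] at h
        have := sub_eq_zero.1 (by simpa using h)
        exact this
  | forget v t ih =>
      have hsubt : t.relConfigs Q ⊆ s := le_trans Finset.subset_union_right hsub
      have hsubB : configs Q (t.bag.erase v) ⊆ s :=
        le_trans Finset.subset_union_left hsub
      have hsubBag : configs Q t.bag ⊆ s :=
        le_trans (configs_bag_subset_relConfigs Q t) hsubt
      refine ⟨ih hsubt (fun p hp => hx p (Or.inl (Or.inl hp))), ?_, ?_⟩
      · have h := hx _ (Or.inl (Or.inr (Set.mem_singleton _)))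
        rw [elift_indw hsubB x] at h
        simpa using h
      · intro K hK
        have hKs : K ∈ s := hsubB hK
        have h := hx _ (Or.inr (Set.mem_image_of_mem _ (Finset.mem_coe.2 hK)))
        simp only at h
        rw [elift_sub, elift_indw ((Finset.filter_subset _ _).trans hsubBag) x,
          elift_single hKs x] at h
        exact sub_eq_zero.1 (by simpa using h)
  | join t₁ t₂ ih₁ ih₂ =>
      have hsub₁ : t₁.relConfigs Q ⊆ s := le_trans Finset.subset_union_left hsub
      have hsub₂ : t₂.relConfigs Q ⊆ s := le_trans Finset.subset_union_right hsub
      exact ⟨ih₁ hsub₁ (fun p hp => hx p (Or.inl hp)),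
        ih₂ hsub₂ (fun p hp => hx p (Or.inr hp))⟩

lemma lpEqns_complete {Q : CSPInstance n} {s : Finset (Fin n → Option ℝ)} {b : NiceTree n}
    {f : (Fin n → Option ℝ) → ℝ}
    (hsub : b.relConfigs Q ⊆ s) (hRC : RelCons Q f b) :
    ∀ p ∈ lpEqns Q s b, elift s p.1 (fun K => f K.1) = (p.2 : ℝ) := by
  have hres : ∀ F : Finset (Fin n → Option ℝ), F ⊆ s →
      ∑ K ∈ F, extx s (fun K => f K.1) K = ∑ K ∈ F, f K := by
    intro F hF
    apply Finset.sum_congr rfl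
    intro K hK
    rw [extx_eq _ (hF hK)]
  induction b with
  | leaf v =>
      rintro p rfl
      rw [elift_indw (F := configs Q {v}) hsub, hres (configs Q {v}) hsub]
      simpa [RelCons] using hRC
  | introduce v t ih =>
      have hsubt : t.relConfigs Q ⊆ s := le_trans Finset.subset_union_right hsub
      have hsubB : configs Q (insert v t.bag) ⊆ s :=
        le_trans Finset.subset_union_left hsub
      rintro p (⟨hp | hp⟩ | ⟨K, hK, rfl⟩)
      · exact ih hsubt hRC.1 p hp
      · cases hp
        rw [elift_indw hsubB, hres _ hsubB]
        simpa using hRC.2.1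
      · rw [Finset.mem_coe] at hK
        have hKs : K ∈ s := hsubt (configs_bag_subset_relConfigs Q t hK)
        simp only
        rw [elift_sub, elift_indw ((Finset.filter_subset _ _).trans hsubB),
          elift_single hKs, hres _ ((Finset.filter_subset _ _).trans hsubB),
          extx_eq _ hKs]
        rw [hRC.2.2 K hK]
        simp
  | forget v t ih =>
      have hsubt : t.relConfigs Q ⊆ s := le_trans Finset.subset_union_right hsub
      have hsubB : configs Q (t.bag.erase v) ⊆ s :=
        le_trans Finset.subset_union_left hsub
      have hsubBag : configs Q t.bag ⊆ s :=
        le_trans (configs_bag_subset_relConfigs Q t) hsubt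
      rintro p (⟨hp | hp⟩ | ⟨K, hK, rfl⟩)
      · exact ih hsubt hRC.1 p hp
      · cases hp
        rw [elift_indw hsubB, hres _ hsubB]
        simpa using hRC.2.1
      · rw [Finset.mem_coe] at hK
        have hKs : K ∈ s := hsubB hK
        simp only
        rw [elift_sub, elift_indw ((Finset.filter_subset _ _).trans hsubBag),
          elift_single hKs, hres _ ((Finset.filter_subset _ _).trans hsubBag),
          extx_eq _ hKs]
        rw [hRC.2.2 K hK]
        simp
  | join t₁ t₂ ih₁ ih₂ =>
      have hsub₁ : t₁.relConfigs Q ⊆ s := le_trans Finset.subset_union_left hsub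
      have hsub₂ : t₂.relConfigs Q ⊆ s := le_trans Finset.subset_union_right hsub
      rintro p (hp | hp)
      · exact ih₁ hsub₁ hRC.1 p hp
      · exact ih₂ hsub₂ hRC.2 p hp

end Eqns

section ExtremeRational
open NiceTree

lemma extreme_rational {Q : CSPInstance n} {T : NiceTree n} {f : (Fin n → Option ℝ) → ℝ}
    (hf : f ∈ Set.extremePoints ℝ (Ppoly Q T)) :
    ∀ K ∈ T.relConfigs Q, ∃ r : ℚ, f K = (r : ℝ) := by
  classical
  obtain ⟨hfP, hfext⟩ := mem_extremePoints.1 hf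
  obtain ⟨⟨hfRC, hfbd⟩, hfoff⟩ := hfP
  set s : Finset (Fin n → Option ℝ) := T.relConfigs Q with hs
  set Lt : Set (({K // K ∈ s} → ℚ) × ℚ) :=
    {p | ∃ K : {K // K ∈ s}, (f K.1 = 0 ∧ p = (indw s {K.1}, 0)) ∨
      (f K.1 = 1 ∧ p = (indw s {K.1}, 1))} with hLt
  set L : Set (({K // K ∈ s} → ℚ) × ℚ) := lpEqns Q s T ∪ Lt with hL
  set x₀ : {K // K ∈ s} → ℝ := fun K => f K.1 with hx₀def
  have hsubs : T.relConfigs Q ⊆ s := le_refl _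
  have hx₀ : ∀ p ∈ L, elift s p.1 x₀ = (p.2 : ℝ) := by
    rintro p (hp | hp)
    · exact lpEqns_complete hsubs hfRC p hp
    · obtain ⟨K, hK⟩ := hp
      have hsingle : elift s (indw s {K.1}) x₀ = f K.1 := by
        rw [elift_single K.2 x₀, extx_eq x₀ K.2, hx₀def]
      rcases hK with ⟨h0, rfl⟩ | ⟨h1, rfl⟩
      · simpa [hsingle, h0] using hsingle.trans h0
      · simpa [hsingle, h1] using hsingle.trans h1
  have huniq : ∀ x : {K // K ∈ s} → ℝ,
      (∀ p ∈ L, elift s p.1 x = (p.2 : ℝ)) → x = x₀ := by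
    intro x hx
    set g : (Fin n → Option ℝ) → ℝ := extx s x with hgdef
    have hgRC : RelCons Q g T := lpEqns_sound hsubs x (fun p hp => hx p (Or.inl hp))
    have hg0 : ∀ K, K ∉ s → g K = 0 := fun K hK => dif_neg hK
    have htight0 : ∀ K, (hKs : K ∈ s) → f K = 0 → g K = 0 := by
      intro K hKs h0
      have := hx (indw s {K}, 0) (Or.inr ⟨⟨K, hKs⟩, Or.inl ⟨h0, rfl⟩⟩)
      rw [elift_single hKs x] at this
      simpa using this
    have htight1 : ∀ K, (hKs : K ∈ s) → f K = 1 → g K = 1 := by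
      intro K hKs h1
      have := hx (indw s {K}, 1) (Or.inr ⟨⟨K, hKs⟩, Or.inr ⟨h1, rfl⟩⟩)
      rw [elift_single hKs x] at this
      simpa using this
    -- perturbation argument
    set c : ℝ := ∑ K ∈ s, |g K - f K| with hc
    have hcnn : 0 ≤ c := Finset.sum_nonneg (fun K _ => abs_nonneg _)
    have hΔle : ∀ K ∈ s, |g K - f K| ≤ c :=
      fun K hK => Finset.single_le_sum (f := fun K => |g K - f K|)
        (fun K _ => abs_nonneg _) hK
    set δ : ℝ := c + 1 with hδ
    have hδpos : 0 < δ := by positivity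
    set dset : Finset ℝ :=
      insert (1:ℝ) (s.image fun K => if f K = 0 ∨ f K = 1 then 1 else min (f K) (1 - f K))
      with hdset
    set d : ℝ := dset.min' ⟨1, Finset.mem_insert_self _ _⟩ with hd
    have hdpos : 0 < d := by
      apply (Finset.lt_min'_iff _ _).2
      intro y hy
      rcases Finset.mem_insert.1 hy with rfl | hy
      · norm_num
      · obtain ⟨K, hKs, rfl⟩ := Finset.mem_image.1 hy
        by_cases htight : f K = 0 ∨ f K = 1
        · rw [if_pos htight]; norm_num
        · rw [if_neg htight]
          push_neg at htight
          have hb := hfbd K hKs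
          rcases lt_or_eq_of_le hb.1 with hlt | heq
          · rcases lt_or_eq_of_le hb.2 with hlt2 | heq2
            · exact lt_min hlt (by linarith)
            · exact absurd heq2 htight.2
          · exact absurd heq.symm htight.1
    have hdle1 : d ≤ 1 := Finset.min'_le _ _ (Finset.mem_insert_self _ _)
    have hdle : ∀ K ∈ s, ¬(f K = 0 ∨ f K = 1) → d ≤ min (f K) (1 - f K) := by
      intro K hK hnt
      have := Finset.min'_le dset _ (Finset.mem_insert_of_mem
        (Finset.mem_image_of_mem _ hK))
      simpa only [if_neg hnt] using this
    set ε : ℝ := d / δ with hε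
    have hεpos : 0 < ε := div_pos hdpos hδpos
    have hεbound : ∀ K ∈ s, |ε * (g K - f K)| ≤ d := by
      intro K hK
      rw [abs_mul, abs_of_pos hεpos]
      calc ε * |g K - f K| ≤ ε * c := by
            apply mul_le_mul_of_nonneg_left (hΔle K hK) (le_of_lt hεpos)
        _ ≤ d := by
            rw [hε]
            rw [div_mul_eq_mul_div]
            apply div_le_of_le_mul₀ (le_of_lt hδpos) (le_of_lt hdpos)
            nlinarith
    set gp : (Fin n → Option ℝ) → ℝ := fun K => f K + ε * (g K - f K) with hgp
    set gm : (Fin n → Option ℝ) → ℝ := fun K => f K - ε * (g K - f K) with hgm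
    have hbounds : ∀ K ∈ s, (0 ≤ gp K ∧ gp K ≤ 1) ∧ (0 ≤ gm K ∧ gm K ≤ 1) := by
      intro K hK
      by_cases htight : f K = 0 ∨ f K = 1
      · rcases htight with h0 | h1
        · have := htight0 K hK h0
          rw [hgp, hgm]
          simp [h0, this]
        · have := htight1 K hK h1
          rw [hgp, hgm]
          simp [h1, this]
      · have hmin := hdle K hK htight
        have habs := hεbound K hK
        have h1 : |ε * (g K - f K)| ≤ min (f K) (1 - f K) := le_trans habs hmin
        have h2 := abs_le.1 h1
        have h3 : min (f K) (1 - f K) ≤ f K := min_le_left _ _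
        have h4 : min (f K) (1 - f K) ≤ 1 - f K := min_le_right _ _
        constructor <;> constructor <;> [skip; skip; skip; skip] <;>
          simp only [hgp, hgm] <;> [linarith; linarith; linarith; linarith]
    have hoff : ∀ K, K ∉ s → gp K = 0 ∧ gm K = 0 := by
      intro K hK
      have h1 : f K = 0 := hfoff K hK
      have h2 : g K = 0 := hg0 K hK
      rw [hgp, hgm]
      simp [h1, h2]
    have hgpP : gp ∈ Ppoly Q T := by
      refine ⟨⟨?_, fun K hK => (hbounds K hK).1⟩, fun K hK => (hoff K hK).1⟩
      have : gp = fun K => (1 - ε) * f K + ε * g K := by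
        funext K; rw [hgp]; ring
      rw [this]
      exact RelCons_affine (by ring) T hfRC hgRC
    have hgmP : gm ∈ Ppoly Q T := by
      refine ⟨⟨?_, fun K hK => (hbounds K hK).2⟩, fun K hK => (hoff K hK).2⟩
      have : gm = fun K => (1 + ε) * f K + (-ε) * g K := by
        funext K; rw [hgm]; ring
      rw [this]
      exact RelCons_affine (by ring) T hfRC hgRC
    have hseg : f ∈ openSegment ℝ gp gm := by
      refine ⟨1/2, 1/2, by norm_num, by norm_num, by norm_num, ?_⟩
      funext K
      simp only [Pi.add_apply, Pi.smul_apply, smul_eq_mul, hgp, hgm]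
      ring
    obtain ⟨hpeq, -⟩ := hfext gp hgpP gm hgmP hseg
    have hgf : ∀ K, g K = f K := by
      intro K
      have := congrFun hpeq K
      rw [hgp] at this
      simp only at this
      have hz : ε * (g K - f K) = 0 := by linarith
      rcases mul_eq_zero.1 hz with h | h
      · exact absurd h (ne_of_gt hεpos)
      · linarith
    funext K
    have hxg : g K.1 = x K := by
      rw [hgdef, extx_eq x K.2]
    show x K = f K.1
    rw [← hxg]
    exact hgf K.1
  have := rat_of_unique s L x₀ hx₀ huniq
  intro K hK
  exact this ⟨K, hK⟩

lemma exists_denom {α : Type*} (s : Finset α) (f : α → ℝ)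
    (hrat : ∀ K ∈ s, ∃ r : ℚ, f K = (r : ℝ)) (hnn : ∀ K ∈ s, 0 ≤ f K) :
    ∃ M : ℕ, 0 < M ∧ ∀ K ∈ s, ∃ m : ℕ, (M : ℝ) * f K = (m : ℕ) := by
  classical
  set r : α → ℚ := fun K => if h : K ∈ s then (hrat K h).choose else 0 with hr
  have hrspec : ∀ K ∈ s, f K = ((r K : ℚ) : ℝ) := by
    intro K hK
    rw [hr]
    simp only [dif_pos hK]
    exact (hrat K hK).choose_spec
  refine ⟨∏ K ∈ s, (r K).den, Finset.prod_pos (fun K _ => (r K).pos), ?_⟩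
  intro K hK
  obtain ⟨c, hc⟩ := Finset.dvd_prod_of_mem (fun K => (r K).den) hK
  have hrnn : 0 ≤ r K := by
    have := hnn K hK
    rw [hrspec K hK] at this
    exact_mod_cast this
  refine ⟨c * (r K).num.toNat, ?_⟩
  have hq : ((∏ K ∈ s, (r K).den : ℕ) : ℚ) * r K = ((c * (r K).num.toNat : ℕ) : ℚ) := by
    have hnum : (((r K).num.toNat : ℕ) : ℚ) = ((r K).num : ℚ) := by
      exact_mod_cast Int.toNat_of_nonneg (Rat.num_nonneg.2 hrnn)
    rw [hc]
    push_cast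
    rw [hnum, mul_comm ((r K).den : ℚ) (c : ℚ), mul_assoc, Rat.den_mul_eq_num]
  rw [hrspec K hK]
  calc ((∏ K ∈ s, (r K).den : ℕ) : ℝ) * ((r K : ℚ) : ℝ)
      = (((((∏ K ∈ s, (r K).den : ℕ) : ℚ)) * r K : ℚ) : ℝ) := by push_cast; ring
    _ = ((c * (r K).num.toNat : ℕ) : ℝ) := by rw [hq]; push_cast; ring

end ExtremeRational

/-- Every vertex (extreme point) `f` of `P(Q)` is, on the
coordinates relevant to any node `b` of `T`, an average of `M` binary vectors
each satisfying the constraints relevant to `T(b)`. -/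
theorem vertex_is_average_of_binary (n : ℕ) (Q : CSPInstance n) (T : NiceTree n)
    (hT : IsNiceTreeDecompCSP Q T) (f : (Fin n → Option ℝ) → ℝ)
    (hf : f ∈ Set.extremePoints ℝ (Ppoly Q T))
    (b : NiceTree n) (hb : b.isSubtree T) :
    ∃ M : ℕ, 0 < M ∧ ∃ I : Fin M → ((Fin n → Option ℝ) → ℝ),
      (∀ i, (∀ K, I i K = 0 ∨ I i K = 1) ∧ RelevantLP Q b (I i)) ∧
      ∀ K ∈ b.relConfigs Q, f K = (1 / (M : ℝ)) * ∑ i, I i K := by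
  classical
  have hfP : f ∈ Ppoly Q T := hf.1
  obtain ⟨⟨hfRC, hfbd⟩, hfoff⟩ := hfP
  have hrat := extreme_rational hf
  obtain ⟨M, hM, hint0⟩ := exists_denom (T.relConfigs Q) f hrat (fun K hK => (hfbd K hK).1)
  set mfn : (Fin n → Option ℝ) → ℕ :=
    fun K => if h : K ∈ T.relConfigs Q then (hint0 K h).choose else 0 with hmfn
  have hmfns : ∀ K ∈ T.relConfigs Q, (M : ℝ) * f K = mfn K := by
    intro K hK
    rw [hmfn]
    simp only [dif_pos hK]
    exact (hint0 K hK).choose_spec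
  have hvalb := NiceTree.valid_of_subtree hb hT.1
  have hRCb := RelCons_of_subtree hb hfRC
  have hintb : ∀ K ∈ b.relConfigs Q, (M : ℝ) * f K = mfn K :=
    fun K hK => hmfns K (NiceTree.relConfigs_subset_of_subtree hb hK)
  obtain ⟨z, hinv, hcnt⟩ := exists_assignment_family mfn b hvalb hRCb hintb
  refine ⟨M, hM, fun i => ind (z i), fun i => ⟨ind_binary (z i), ?_, ?_⟩, fun K hK => ?_⟩
  · exact RelCons_ind (fun s hs => hinv i s hs)
  · intro K _
    dsimp only
    rcases ind_binary (z i) K with h | h <;> rw [h] <;> norm_num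
  · have h := hcnt K hK
    have hM0 : (M : ℝ) ≠ 0 := ne_of_gt (by exact_mod_cast hM)
    rw [← h]
    field_simp
end

section
/- Let c be a join node of the nice tree decomposition T with children a and b (so B(a) = B(b) = B(c)), and let f ∈ P(Q). Suppose there are a positive integer M and binary vectors I_1,…,I_M ∈ {0,1}^(ℛ(a)), each satisfying the constraints relevant to T(a), with f|_a = (1/M) Σ_i I_i, and binary vectors J_1,…,J_M ∈ {0,1}^(ℛ(b)), each satisfying the constraints relevant to T(b), with f|_b = (1/M) Σ_i J_i. Then there exist binary vectors L_1,…,L_M ∈ {0,1}^(ℛ(c)), each satisfying the constraints relevant to T(c), such that f|_c = (1/M) Σ_i L_i. -/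
variable {n : ℕ}

section Aux

variable {Q : CSPInstance n}

lemma configs_none {K : Fin n → Option ℝ} {W : Finset (Fin n)}
    (hK : K ∈ configs Q W) {v : Fin n} (hv : v ∉ W) : K v = none := by
  classical
  have h := (Finset.mem_filter.1 hK).1
  have h2 := (Fintype.mem_piFinset.1 h) v
  simpa [hv] using h2

lemma configs_some {K : Fin n → Option ℝ} {W : Finset (Fin n)}
    (hK : K ∈ configs Q W) {v : Fin n} (hv : v ∈ W) : K v ≠ none := by
  classical
  have h := (Finset.mem_filter.1 hK).1
  have h2 := (Fintype.mem_piFinset.1 h) v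
  simp only [hv, if_pos, Finset.mem_image] at h2
  obtain ⟨x, -, hx⟩ := h2
  simp [← hx]

lemma eq_iff_agree {K κ : Fin n → Option ℝ} {W : Finset (Fin n)}
    (hK : K ∈ configs Q W) (hκ : κ ∈ configs Q W) :
    K = κ ↔ ∀ v, K v = none ∨ K v = κ v := by
  constructor
  · rintro rfl v; exact Or.inr rfl
  · intro h
    funext v
    by_cases hv : v ∈ W
    · rcases h v with h0 | h1
      · exact absurd h0 (configs_some hK hv)
      · exact h1
    · rw [configs_none hK hv, configs_none hκ hv]

lemma bag_subset_verts (t : NiceTree n) : t.bag ⊆ t.verts := by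
  induction t with
  | leaf v => exact Finset.Subset.refl _
  | introduce v t ih => exact Finset.insert_subset_insert v ih
  | forget v t ih => exact (Finset.erase_subset _ _).trans ih
  | join t₁ t₂ ih₁ ih₂ => exact ih₁.trans Finset.subset_union_left

lemma configs_bag_subset_relConfigs (t : NiceTree n) :
    configs Q t.bag ⊆ t.relConfigs Q := by
  induction t with
  | leaf v => exact Finset.Subset.refl _
  | introduce v t ih => exact Finset.subset_union_left
  | forget v t ih => exact Finset.subset_union_left
  | join t₁ t₂ ih₁ ih₂ => exact ih₁.trans Finset.subset_union_left

lemma relConfigs_support {t : NiceTree n} {K : Fin n → Option ℝ}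
    (hK : K ∈ t.relConfigs Q) {v : Fin n} (hv : K v ≠ none) : v ∈ t.verts := by
  induction t with
  | leaf w =>
    by_contra hw
    exact hv (configs_none hK (by simpa [NiceTree.verts] using hw))
  | introduce w t ih =>
    rcases Finset.mem_union.1 hK with h | h
    · by_contra hw
      refine hv (configs_none h ?_)
      simp only [NiceTree.verts, Finset.mem_insert, not_or] at hw
      intro hmem
      rcases Finset.mem_insert.1 hmem with h1 | h1
      · exact hw.1 h1
      · exact hw.2 (bag_subset_verts t h1)
    · exact Finset.mem_insert_of_mem (ih h)
  | forget w t ih =>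
    rcases Finset.mem_union.1 hK with h | h
    · by_contra hw
      exact hv (configs_none h (fun hmem =>
        hw (bag_subset_verts t (Finset.mem_of_mem_erase hmem))))
    · exact ih h
  | join t₁ t₂ ih₁ ih₂ =>
    rcases Finset.mem_union.1 hK with h | h
    · exact Finset.mem_union_left _ (ih₁ h)
    · exact Finset.mem_union_right _ (ih₂ h)

lemma relCons_sum_bag {g : (Fin n → Option ℝ) → ℝ} {t : NiceTree n}
    (h : RelCons Q g t) : ∑ K ∈ configs Q t.bag, g K = 1 := by
  induction t with
  | leaf v => exact h
  | introduce v t ih => exact h.2.1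
  | forget v t ih => exact h.2.1
  | join t₁ t₂ ih₁ ih₂ => exact ih₁ h.1

lemma exists_selected {s : Finset (Fin n → Option ℝ)} {g : (Fin n → Option ℝ) → ℝ}
    (hbin : ∀ K, g K = 0 ∨ g K = 1) (hsum : ∑ K ∈ s, g K = 1) :
    ∃ κ ∈ s, ∀ K ∈ s, g K = if K = κ then 1 else 0 := by
  classical
  have h1 : ∑ K ∈ s.filter (fun K => g K = 1), g K
      = ((s.filter (fun K => g K = 1)).card : ℝ) := by
    rw [Finset.sum_congr rfl (fun K hK => (Finset.mem_filter.1 hK).2)]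
    simp
  have h2 : ∑ K ∈ s.filter (fun K => ¬ g K = 1), g K = 0 := by
    refine Finset.sum_eq_zero fun K hK => ?_
    rcases hbin K with h | h
    · exact h
    · exact absurd h (Finset.mem_filter.1 hK).2
  have key : ∑ K ∈ s, g K = ((s.filter (fun K => g K = 1)).card : ℝ) := by
    rw [← Finset.sum_filter_add_sum_filter_not s (fun K => g K = 1) g, h1, h2, add_zero]
  have hcard : ((s.filter (fun K => g K = 1)).card : ℝ) = 1 := by
    rw [← key, hsum]
  have hcard' : (s.filter (fun K => g K = 1)).card = 1 := by
    exact_mod_cast hcard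
  obtain ⟨κ, hκ⟩ := Finset.card_eq_one.1 hcard'
  have hκmem : κ ∈ s.filter (fun K => g K = 1) := by rw [hκ]; simp
  refine ⟨κ, (Finset.mem_filter.1 hκmem).1, fun K hK => ?_⟩
  by_cases hKκ : K = κ
  · subst hKκ; simp [(Finset.mem_filter.1 hκmem).2]
  · rw [if_neg hKκ]
    rcases hbin K with h | h
    · exact h
    · exact absurd (hκ ▸ Finset.mem_filter.2 ⟨hK, h⟩) (by simp [hKκ])

lemma relCons_congr {g g' : (Fin n → Option ℝ) → ℝ} {t : NiceTree n}
    (h : ∀ K ∈ t.relConfigs Q, g K = g' K) (hg : RelCons Q g t) :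
    RelCons Q g' t := by
  induction t with
  | leaf v =>
    exact Eq.trans (Finset.sum_congr rfl fun K hK => (h K hK).symm) hg
  | introduce v t ih =>
    have hsub : configs Q (insert v t.bag) ⊆ (NiceTree.introduce v t).relConfigs Q :=
      Finset.subset_union_left
    have hsubt : ∀ K ∈ t.relConfigs Q, K ∈ (NiceTree.introduce v t).relConfigs Q :=
      fun K hK => Finset.mem_union_right _ hK
    refine ⟨ih (fun K hK => h K (hsubt K hK)) hg.1, ?_, ?_⟩
    · rw [Finset.sum_congr rfl (fun K hK => (h K (hsub hK)).symm)]
      exact hg.2.1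
    · intro K hK
      have hKrel : K ∈ (NiceTree.introduce v t).relConfigs Q :=
        hsubt K (configs_bag_subset_relConfigs t hK)
      rw [← h K hKrel,
        Finset.sum_congr rfl (fun K' hK' => (h K' (hsub (Finset.mem_filter.1 hK').1)).symm)]
      exact hg.2.2 K hK
  | forget v t ih =>
    have hsub : configs Q (t.bag.erase v) ⊆ (NiceTree.forget v t).relConfigs Q :=
      Finset.subset_union_left
    have hsubt : ∀ K ∈ t.relConfigs Q, K ∈ (NiceTree.forget v t).relConfigs Q :=
      fun K hK => Finset.mem_union_right _ hK
    refine ⟨ih (fun K hK => h K (hsubt K hK)) hg.1, ?_, ?_⟩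
    · rw [Finset.sum_congr rfl (fun K hK => (h K (hsub hK)).symm)]
      exact hg.2.1
    · intro K hK
      rw [← h K (hsub hK),
        Finset.sum_congr rfl (fun K' hK' => (h K'
          (hsubt _ (configs_bag_subset_relConfigs t (Finset.mem_filter.1 hK').1))).symm)]
      exact hg.2.2 K hK
  | join t₁ t₂ ih₁ ih₂ =>
    exact ⟨ih₁ (fun K hK => h K (Finset.mem_union_left _ hK)) hg.1,
           ih₂ (fun K hK => h K (Finset.mem_union_right _ hK)) hg.2⟩

lemma valid_of_subtree {s : NiceTree n} :
    ∀ {T : NiceTree n}, s.isSubtree T → T.valid → s.valid := by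
  intro T
  induction T with
  | leaf v => rintro rfl -; trivial
  | introduce v t ih =>
    rintro (rfl | h) hv
    · exact hv
    · exact ih h hv.2
  | forget v t ih =>
    rintro (rfl | h) hv
    · exact hv
    · exact ih h hv.2
  | join t₁ t₂ ih₁ ih₂ =>
    rintro (rfl | h | h) hv
    · exact hv
    · exact ih₁ h hv.2.2.1
    · exact ih₂ h hv.2.2.2

/-- Key structural lemma: for a binary vector satisfying the relevant
constraints, the value at any relevant configuration supported inside the root
bag is determined by the selected root configuration. -/
lemma binary_determined (Q : CSPInstance n) :
    ∀ t : NiceTree n, t.valid →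
    ∀ g : (Fin n → Option ℝ) → ℝ, (∀ K, g K = 0 ∨ g K = 1) → RelCons Q g t →
    ∀ κ ∈ configs Q t.bag,
      (∀ K ∈ configs Q t.bag, g K = if K = κ then 1 else 0) →
      ∀ K ∈ t.relConfigs Q, (∀ v, K v ≠ none → v ∈ t.bag) →
        g K = if (∀ v, K v = none ∨ K v = κ v) then 1 else 0 := by
  intro t
  induction t with
  | leaf v =>
    intro _ g hbin hrel κ hκ hsel K hK _
    rw [hsel K hK]
    exact if_congr (eq_iff_agree hK hκ) rfl rfl
  | introduce v t ih =>
    intro hval g hbin hrel κ hκ hsel K hK hsupp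
    obtain ⟨κ', hκ'mem, hκ'sel⟩ := exists_selected hbin (relCons_sum_bag hrel.1)
    -- the selected root config restricts to the selected child config
    have hres : restrictCfg κ t.bag = κ' := by
      have hc := hrel.2.2 κ' hκ'mem
      rw [hκ'sel κ' hκ'mem, if_pos rfl] at hc
      obtain ⟨K'', hK''mem, hK''sel⟩ := exists_selected hbin hc
      have h1 := Finset.mem_filter.1 hK''mem
      have hg1 : g K'' = 1 := by rw [hK''sel K'' hK''mem, if_pos rfl]
      have : K'' = κ := by
        have := hsel K'' h1.1
        rw [hg1] at this
        by_contra hne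
        rw [if_neg hne] at this
        norm_num at this
      rw [← this]
      exact h1.2
    have hagree : ∀ w ∈ t.bag, κ' w = κ w := by
      intro w hw
      rw [← hres]
      simp [restrictCfg, hw]
    rcases Finset.mem_union.1 hK with h | h
    · rw [hsel K h]
      exact if_congr (eq_iff_agree h hκ) rfl rfl
    · have hsupp' : ∀ w, K w ≠ none → w ∈ t.bag := by
        intro w hw
        have h1 := hsupp w hw
        have h2 := relConfigs_support h hw
        rcases Finset.mem_insert.1 h1 with h1 | h1
        · exact absurd (h1 ▸ h2) hval.1
        · exact h1
      rw [ih hval.2 g hbin hrel.1 κ' hκ'mem hκ'sel K h hsupp']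
      refine if_congr ⟨fun hp w => ?_, fun hp w => ?_⟩ rfl rfl
      · rcases hp w with h0 | h0
        · exact Or.inl h0
        · by_cases hw : K w = none
          · exact Or.inl hw
          · exact Or.inr (h0.trans (hagree w (hsupp' w hw)))
      · rcases hp w with h0 | h0
        · exact Or.inl h0
        · by_cases hw : K w = none
          · exact Or.inl hw
          · exact Or.inr (h0.trans (hagree w (hsupp' w hw)).symm)
  | forget v t ih =>
    intro hval g hbin hrel κ hκ hsel K hK hsupp
    obtain ⟨κ', hκ'mem, hκ'sel⟩ := exists_selected hbin (relCons_sum_bag hrel.1)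
    have hres : restrictCfg κ' (t.bag.erase v) = κ := by
      have hc := hrel.2.2 κ hκ
      rw [hsel κ hκ, if_pos rfl] at hc
      obtain ⟨K'', hK''mem, hK''sel⟩ := exists_selected hbin hc
      have h1 := Finset.mem_filter.1 hK''mem
      have hg1 : g K'' = 1 := by rw [hK''sel K'' hK''mem, if_pos rfl]
      have : K'' = κ' := by
        have := hκ'sel K'' h1.1
        rw [hg1] at this
        by_contra hne
        rw [if_neg hne] at this
        norm_num at this
      rw [← this]
      exact h1.2
    have hagree : ∀ w ∈ t.bag.erase v, κ w = κ' w := by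
      intro w hw
      rw [← hres]
      simp [restrictCfg, hw]
    rcases Finset.mem_union.1 hK with h | h
    · rw [hsel K h]
      exact if_congr (eq_iff_agree h hκ) rfl rfl
    · have hsupp' : ∀ w, K w ≠ none → w ∈ t.bag :=
        fun w hw => Finset.mem_of_mem_erase (hsupp w hw)
      rw [ih hval.2 g hbin hrel.1 κ' hκ'mem hκ'sel K h hsupp']
      refine if_congr ⟨fun hp w => ?_, fun hp w => ?_⟩ rfl rfl
      · rcases hp w with h0 | h0
        · exact Or.inl h0
        · by_cases hw : K w = none
          · exact Or.inl hw
          · exact Or.inr (h0.trans (hagree w (hsupp w hw)).symm)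
      · rcases hp w with h0 | h0
        · exact Or.inl h0
        · by_cases hw : K w = none
          · exact Or.inl hw
          · exact Or.inr (h0.trans (hagree w (hsupp w hw)))
  | join t₁ t₂ ih₁ ih₂ =>
    intro hval g hbin hrel κ hκ hsel K hK hsupp
    have hbag : t₁.bag = t₂.bag := hval.1
    rcases Finset.mem_union.1 hK with h | h
    · exact ih₁ hval.2.2.1 g hbin hrel.1 κ hκ hsel K h hsupp
    · refine ih₂ hval.2.2.2 g hbin hrel.2 κ (hbag ▸ hκ) ?_ K h ?_
      · intro K' hK'
        exact hsel K' (hbag ▸ hK')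
      · intro w hw
        exact hbag ▸ hsupp w hw

end Aux

/-- Inductive step at a join node. -/
theorem join_step (n : ℕ) (Q : CSPInstance n) (T : NiceTree n)
    (hT : IsNiceTreeDecompCSP Q T) (a b : NiceTree n)
    (hsub : (NiceTree.join a b).isSubtree T)
    (f : (Fin n → Option ℝ) → ℝ) (hf : f ∈ Ppoly Q T)
    (M : ℕ) (hM : 0 < M)
    (I : Fin M → ((Fin n → Option ℝ) → ℝ))
    (hIbin : ∀ i K, I i K = 0 ∨ I i K = 1)
    (hIrel : ∀ i, RelevantLP Q a (I i))
    (hIavg : ∀ K ∈ a.relConfigs Q, f K = (1 / (M : ℝ)) * ∑ i, I i K)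
    (J : Fin M → ((Fin n → Option ℝ) → ℝ))
    (hJbin : ∀ i K, J i K = 0 ∨ J i K = 1)
    (hJrel : ∀ i, RelevantLP Q b (J i))
    (hJavg : ∀ K ∈ b.relConfigs Q, f K = (1 / (M : ℝ)) * ∑ i, J i K) :
    ∃ L : Fin M → ((Fin n → Option ℝ) → ℝ),
      (∀ i K, L i K = 0 ∨ L i K = 1) ∧
      (∀ i, RelevantLP Q (NiceTree.join a b) (L i)) ∧
      ∀ K ∈ (NiceTree.join a b).relConfigs Q,
        f K = (1 / (M : ℝ)) * ∑ i, L i K := by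
  classical
  have hvj : (NiceTree.join a b).valid := valid_of_subtree hsub hT.1
  obtain ⟨hbag, hint, hva, hvb⟩ := hvj
  -- selected root configurations of each `I i` and `J i`
  have hIsel : ∀ i, ∃ κ ∈ configs Q a.bag,
      ∀ K ∈ configs Q a.bag, I i K = if K = κ then 1 else 0 :=
    fun i => exists_selected (hIbin i) (relCons_sum_bag (hIrel i).1)
  choose κI hκImem hκIsel using hIsel
  have hJsel : ∀ i, ∃ κ ∈ configs Q a.bag,
      ∀ K ∈ configs Q a.bag, J i K = if K = κ then 1 else 0 := by
    intro i
    have h := exists_selected (hJbin i) (relCons_sum_bag (hJrel i).1)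
    rwa [← hbag] at h
  choose κJ hκJmem hκJsel using hJsel
  -- counting: the multiset of selected configurations agrees
  have hM0 : (1 / (M : ℝ)) ≠ 0 := by positivity
  have hcount : ∀ K ∈ configs Q a.bag,
      (Finset.univ.filter fun i : Fin M => K = κI i).card
        = (Finset.univ.filter fun i : Fin M => K = κJ i).card := by
    intro K hK
    have hKa : K ∈ a.relConfigs Q := configs_bag_subset_relConfigs a hK
    have hKb : K ∈ b.relConfigs Q := by
      refine configs_bag_subset_relConfigs b ?_
      rwa [← hbag]
    have h1 : (1 / (M : ℝ)) * ∑ i, I i K = (1 / (M : ℝ)) * ∑ i, J i K := by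
      rw [← hIavg K hKa, ← hJavg K hKb]
    have h2 : ∑ i, I i K = ∑ i, J i K := mul_left_cancel₀ hM0 h1
    have h3 : ∑ i, I i K
        = ((Finset.univ.filter fun i : Fin M => K = κI i).card : ℝ) := by
      rw [Finset.sum_congr rfl (fun i _ => hκIsel i K hK), Finset.sum_boole]
    have h4 : ∑ i, J i K
        = ((Finset.univ.filter fun i : Fin M => K = κJ i).card : ℝ) := by
      rw [Finset.sum_congr rfl (fun i _ => hκJsel i K hK), Finset.sum_boole]
    exact_mod_cast h3.symm.trans (h2.trans h4)
  -- a permutation matching the selected configurations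
  let fI : Fin M → {K // K ∈ configs Q a.bag} := fun i => ⟨κI i, hκImem i⟩
  let fJ : Fin M → {K // K ∈ configs Q a.bag} := fun i => ⟨κJ i, hκJmem i⟩
  have hfib : ∀ x : {K // K ∈ configs Q a.bag},
      Fintype.card {i // fI i = x} = Fintype.card {i // fJ i = x} := by
    intro x
    rw [Fintype.card_subtype, Fintype.card_subtype]
    have e1 : (Finset.univ.filter fun i : Fin M => fI i = x)
        = (Finset.univ.filter fun i : Fin M => x.1 = κI i) := by
      ext i; simp [fI, Subtype.ext_iff, eq_comm]
    have e2 : (Finset.univ.filter fun i : Fin M => fJ i = x)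
        = (Finset.univ.filter fun i : Fin M => x.1 = κJ i) := by
      ext i; simp [fJ, Subtype.ext_iff, eq_comm]
    rw [e1, e2]
    exact hcount x.1 x.2
  let e : Fin M ≃ Fin M :=
    (Equiv.sigmaFiberEquiv fI).symm.trans
      ((Equiv.sigmaCongrRight fun x => Fintype.equivOfCardEq (hfib x)).trans
        (Equiv.sigmaFiberEquiv fJ))
  have he : ∀ i, κJ (e i) = κI i := by
    intro i
    have h : fJ (e i) = fI i :=
      ((Fintype.equivOfCardEq (hfib (fI i))) ⟨i, rfl⟩).2
    exact congrArg Subtype.val h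
  -- compatibility on the overlap
  have hcompat : ∀ i K, K ∈ a.relConfigs Q → K ∈ b.relConfigs Q →
      I i K = J (e i) K := by
    intro i K hKa hKb
    have hsupp : ∀ v, K v ≠ none → v ∈ a.bag := fun v hv =>
      hint (Finset.mem_inter.2 ⟨relConfigs_support hKa hv, relConfigs_support hKb hv⟩)
    have hIa := binary_determined Q a hva (I i) (hIbin i) (hIrel i).1
      (κI i) (hκImem i) (hκIsel i) K hKa hsupp
    have hκImem' : κI i ∈ configs Q b.bag := by rw [← hbag]; exact hκImem i
    have hselJ : ∀ K' ∈ configs Q b.bag, J (e i) K' = if K' = κI i then 1 else 0 := by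
      intro K' hK'
      have hK'' : K' ∈ configs Q a.bag := by rwa [hbag]
      rw [hκJsel (e i) K' hK'', he i]
    have hsupp' : ∀ v, K v ≠ none → v ∈ b.bag := by
      intro v hv; rw [← hbag]; exact hsupp v hv
    have hJb := binary_determined Q b hvb (J (e i)) (hJbin (e i)) (hJrel (e i)).1
      (κI i) hκImem' hselJ K hKb hsupp'
    rw [hIa, hJb]
  refine ⟨fun i K => if K ∈ a.relConfigs Q then I i K
      else if K ∈ b.relConfigs Q then J (e i) K else 0, ?_, ?_, ?_⟩
  · intro i K
    simp only
    split_ifs with h1 h2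
    · exact hIbin i K
    · exact hJbin (e i) K
    · exact Or.inl rfl
  · intro i
    constructor
    · refine ⟨?_, ?_⟩
      · refine relCons_congr (fun K hK => ?_) (hIrel i).1
        simp only [if_pos hK]
      · refine relCons_congr (fun K hK => ?_) (hJrel (e i)).1
        beta_reduce
        by_cases hKa : K ∈ a.relConfigs Q
        · rw [if_pos hKa, hcompat i K hKa hK]
        · rw [if_neg hKa, if_pos hK]
    · intro K hK
      simp only
      split_ifs with h1 h2
      · rcases hIbin i K with h | h <;> simp [h]
      · rcases hJbin (e i) K with h | h <;> simp [h]
      · norm_num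
  · intro K hK
    rcases Finset.mem_union.1 hK with h | h
    · rw [hIavg K h]
      congr 1
      exact Finset.sum_congr rfl fun i _ => (if_pos h).symm
    · by_cases hKa : K ∈ a.relConfigs Q
      · rw [hIavg K hKa]
        congr 1
        exact Finset.sum_congr rfl fun i _ => (if_pos hKa).symm
      · rw [hJavg K h]
        congr 1
        rw [← Equiv.sum_comp e (fun j => J j K)]
        refine Finset.sum_congr rfl fun i _ => ?_
        beta_reduce
        rw [if_neg hKa, if_pos h]
end
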